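/- arXiv:1406.5706 — 14 statements merged into one kernel-verified Lean document; each statement's English description precedes it below -/
import Mathlib

section
/- Let 0 < α < 1 and n ≥ 1. Let U be the n×n upper triangular matrix with U_{ij} = 1 for i ≤ j and U_{ij} = 0 for i > j, and let W be the n×n diagonal matrix with W_{jj} = (α − α²)·α^{j−1} for 1 ≤ j ≤ n−1 and W_{nn} = (α − α²)·α^{n−1}/(1 − α) = α^n. Then K = U W Uᵀ. -/
open Matrix

/-- The first-order stable spline (TC) kernel `K` with `K i j = α ^ max(i,j)`
(1-indexed) admits the factorization `K = U W Uᵀ` where `U` is the upper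
triangular matrix of all ones and `W` is the indicated diagonal matrix. -/
theorem stmt_0 (n : ℕ) (hn : 1 ≤ n) (α : ℝ) (hα0 : 0 < α) (hα1 : α < 1)
    (K U W : Matrix (Fin n) (Fin n) ℝ)
    (hK : ∀ i j : Fin n, K i j = α ^ (max (i : ℕ) (j : ℕ) + 1))
    (hU : ∀ i j : Fin n, U i j = if (i : ℕ) ≤ (j : ℕ) then (1 : ℝ) else 0)
    (hW : ∀ i j : Fin n, W i j =
      if i = j then
        (if (i : ℕ) = n - 1 then (α - α ^ 2) * α ^ (n - 1) / (1 - α)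
         else (α - α ^ 2) * α ^ (i : ℕ))
      else 0) :
    K = U * W * Uᵀ := by
  have h1α : (1 : ℝ) - α ≠ 0 := by linarith
  set g : ℕ → ℝ := fun k => if k < n then α ^ (k + 1) else 0 with hg
  ext i j
  set m : ℕ := max (i : ℕ) (j : ℕ) with hm
  set f : ℕ → ℝ := fun k => if m ≤ k then g k - g (k + 1) else 0 with hf
  have hUW : ∀ k : Fin n, (U * W) i k = U i k * W k k := by
    intro k
    rw [Matrix.mul_apply]
    refine Finset.sum_eq_single k (fun l _ hl => ?_) (by simp)
    rw [hW]
    simp [hl]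
  have hterm : ∀ k : Fin n, (U * W) i k * Uᵀ k j = f k := by
    intro k
    rw [hUW, transpose_apply, hU, hU, hW, hf]
    simp only [if_pos rfl]
    have hkn : (k : ℕ) < n := k.isLt
    by_cases hik : (i : ℕ) ≤ (k : ℕ)
    · by_cases hjk : (j : ℕ) ≤ (k : ℕ)
      · have hmk : m ≤ (k : ℕ) := max_le hik hjk
        rw [if_pos hik, if_pos hjk, if_pos hmk]
        by_cases hke : (k : ℕ) = n - 1
        · have hk1 : (k : ℕ) + 1 = n := by omega
          have hgn : g ((k : ℕ) + 1) = 0 := by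
            rw [hg]; simp only
            rw [if_neg (by omega)]
          have hgk : g (k : ℕ) = α * α ^ (n - 1) := by
            rw [hg]; simp only
            rw [if_pos hkn, hke]
            have : n - 1 + 1 = n := by omega
            rw [this]
            conv_lhs => rw [show n = (n - 1) + 1 by omega]
            rw [pow_succ]; ring
          rw [if_pos hke, hgk, hgn]
          simp only [if_true]
          field_simp
          ring
        · have hk1 : (k : ℕ) + 1 < n := by omega
          have hgk : g (k : ℕ) = α ^ ((k : ℕ) + 1) := by
            rw [hg]; simp only; rw [if_pos hkn]
          have hgk1 : g ((k : ℕ) + 1) = α ^ ((k : ℕ) + 1 + 1) := by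
            rw [hg]; simp only; rw [if_pos hk1]
          rw [if_neg hke, hgk, hgk1]
          simp only [if_true]
          ring
      · have hc : ¬ m ≤ (k : ℕ) := by omega
        rw [if_neg hjk, if_neg hc]; ring
    · have hc : ¬ m ≤ (k : ℕ) := by omega
      rw [if_neg hik, if_neg hc]; ring
  have hmn : m < n := by
    have := i.isLt; have := j.isLt; omega
  have hsum : ∑ k : Fin n, (U * W) i k * Uᵀ k j = α ^ (m + 1) :=
    calc ∑ k : Fin n, (U * W) i k * Uᵀ k j
        = ∑ k : Fin n, f (k : ℕ) := Finset.sum_congr rfl fun k _ => hterm k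
      _ = ∑ k ∈ Finset.range n, f k := Fin.sum_univ_eq_sum_range f n
      _ = ∑ k ∈ Finset.Ico m n, (g k - g (k + 1)) := by
          rw [hf, ← Finset.sum_filter]
          congr 1
          ext k
          simp [Finset.mem_filter, Finset.mem_Ico, and_comm]
      _ = (g 0 - g n) - (g 0 - g m) := by
          rw [Finset.sum_Ico_eq_sub _ hmn.le, Finset.sum_range_sub' g,
            Finset.sum_range_sub' g]
      _ = α ^ (m + 1) := by
          rw [hg]; simp only
          rw [if_pos hmn, if_neg (lt_irrefl n)]
          ring
  rw [hK, Matrix.mul_apply, hsum]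
end

section
/- Let 0 < α < 1 and n ≥ 2. Then K is invertible and K⁻¹ = T, where T is the symmetric tridiagonal n×n matrix with entries T_{11} = 1/(α − α²); T_{ii} = (1/(α − α²))·(α^{2−i} + α^{1−i}) for 2 ≤ i ≤ n−1; T_{nn} = (1/(α − α²))·(α^{2−n} + (1 − α)·α^{1−n}); T_{i,i+1} = T_{i+1,i} = −(1/(α − α²))·α^{1−i} for 1 ≤ i ≤ n−1; and T_{ij} = 0 whenever |i − j| > 1. -/
lemma sum2_aux {n : ℕ} (f : Fin n → ℝ) (a b : Fin n) (hab : a ≠ b)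
    (h0 : ∀ k, k ≠ a → k ≠ b → f k = 0) :
    (∑ k, f k) = f a + f b := by
  have h : ∑ k ∈ ({a, b} : Finset (Fin n)), f k = ∑ k, f k := by
    refine Finset.sum_subset (Finset.subset_univ _) ?_
    intro x _ hx
    simp only [Finset.mem_insert, Finset.mem_singleton, not_or] at hx
    exact h0 x hx.1 hx.2
  rw [← h, Finset.sum_pair hab]

lemma sum3_aux {n : ℕ} (f : Fin n → ℝ) (a b c : Fin n) (hab : a ≠ b) (hac : a ≠ c)
    (hbc : b ≠ c) (h0 : ∀ k, k ≠ a → k ≠ b → k ≠ c → f k = 0) :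
    (∑ k, f k) = f a + f b + f c := by
  have h : ∑ k ∈ ({a, b, c} : Finset (Fin n)), f k = ∑ k, f k := by
    refine Finset.sum_subset (Finset.subset_univ _) ?_
    intro x _ hx
    simp only [Finset.mem_insert, Finset.mem_singleton, not_or] at hx
    exact h0 x hx.1 hx.2.1 hx.2.2
  rw [← h, Finset.sum_insert (by simp [hab, hac]), Finset.sum_pair hbc, add_assoc]

/-- The first-order stable spline kernel `K` (entries `K_{ij} = α^{max(i,j)}`,
1-indexed) is invertible and its inverse is the indicated symmetric tridiagonal
matrix `T`. -/
theorem stmt_1 (n : ℕ) (hn : 2 ≤ n) (α : ℝ) (hα0 : 0 < α) (hα1 : α < 1)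
    (K T : Matrix (Fin n) (Fin n) ℝ)
    (hK : ∀ i j : Fin n, K i j = α ^ (max (i : ℕ) (j : ℕ) + 1))
    (hT : ∀ i j : Fin n, T i j =
      if (i : ℕ) = (j : ℕ) then
        (if (i : ℕ) = 0 then 1 / (α - α ^ 2)
         else if (i : ℕ) = n - 1 then
           (1 / (α - α ^ 2)) * (α ^ ((2 : ℤ) - (n : ℤ)) + (1 - α) * α ^ ((1 : ℤ) - (n : ℤ)))
         else (1 / (α - α ^ 2)) * (α ^ ((1 : ℤ) - ((i : ℕ) : ℤ)) + α ^ (-((i : ℕ) : ℤ))))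
      else if (i : ℕ) + 1 = (j : ℕ) ∨ (j : ℕ) + 1 = (i : ℕ) then
        -(1 / (α - α ^ 2)) * α ^ (-((min (i : ℕ) (j : ℕ) : ℕ) : ℤ))
      else 0) :
    IsUnit K.det ∧ K⁻¹ = T := by
  have hα : α ≠ 0 := ne_of_gt hα0
  have hdpos : 0 < α - α ^ 2 := by nlinarith
  have hd : α - α ^ 2 ≠ 0 := ne_of_gt hdpos
  have key : T * K = 1 := by
    ext i j
    rw [Matrix.mul_apply, Matrix.one_apply]
    have hin : (i : ℕ) < n := i.isLt
    have hjn : (j : ℕ) < n := j.isLt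
    by_cases hi0 : (i : ℕ) = 0
    · -- first row
      set a : Fin n := ⟨0, by omega⟩ with ha
      set b : Fin n := ⟨1, by omega⟩ with hb
      have hav : (a : ℕ) = 0 := rfl
      have hbv : (b : ℕ) = 1 := rfl
      rw [sum2_aux _ a b (by simp [ha, hb, Fin.ext_iff])
        (fun k hka hkb => by
          have hka' : (k : ℕ) ≠ 0 := fun h => hka (Fin.ext (h.trans hav.symm))
          have hkb' : (k : ℕ) ≠ 1 := fun h => hkb (Fin.ext (h.trans hbv.symm))
          rw [hT, if_neg (by omega), if_neg (by omega), zero_mul])]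
      have hTa : T i a = 1 / (α - α ^ 2) := by
        rw [hT, if_pos (by omega), if_pos hi0]
      have hTb : T i b = -(1 / (α - α ^ 2)) := by
        rw [hT, if_neg (by omega), if_pos (by omega),
          show min (i : ℕ) (b : ℕ) = 0 by omega]
        simp
      rw [hTa, hTb, hK, hK, hav, hbv]
      by_cases hj0 : (j : ℕ) = 0
      · rw [if_pos (Fin.ext (by omega)), hj0]
        norm_num
        field_simp [sub_ne_zero.mpr (ne_of_gt hα1)]
        ring
      · rw [if_neg (fun h => hj0 (by rw [← Fin.ext_iff.mp h]; omega)),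
          show max 0 (j : ℕ) = (j : ℕ) by omega, show max 1 (j : ℕ) = (j : ℕ) by omega]
        ring
    · by_cases hin1 : (i : ℕ) = n - 1
      · -- last row
        obtain ⟨m, hm⟩ : ∃ m, n = m + 2 := ⟨n - 2, by omega⟩
        set a : Fin n := ⟨m, by omega⟩ with ha
        set b : Fin n := ⟨m + 1, by omega⟩ with hb
        have hav : (a : ℕ) = m := rfl
        have hbv : (b : ℕ) = m + 1 := rfl
        have hiv : (i : ℕ) = m + 1 := by omega
        rw [sum2_aux _ a b (by simp [ha, hb, Fin.ext_iff])
          (fun k hka hkb => by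
            have hkn : (k : ℕ) < n := k.isLt
            have hka' : (k : ℕ) ≠ m := fun h => hka (Fin.ext (h.trans hav.symm))
            have hkb' : (k : ℕ) ≠ m + 1 := fun h => hkb (Fin.ext (h.trans hbv.symm))
            rw [hT, if_neg (by omega), if_neg (by omega), zero_mul])]
        have hTa : T i a = -(1 / (α - α ^ 2)) * α ^ (-((m : ℕ) : ℤ)) := by
          rw [hT, if_neg (by omega), if_pos (by omega),
            show min (i : ℕ) (a : ℕ) = m by omega]
        have hTb : T i b = (1 / (α - α ^ 2)) *
            (α ^ (-((m : ℕ) : ℤ)) + (1 - α) * α ^ (-(((m + 1 : ℕ)) : ℤ))) := by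
          rw [hT, if_pos (by omega), if_neg (by omega), if_pos (by omega),
            show ((2 : ℤ) - (n : ℤ)) = -((m : ℕ) : ℤ) by push_cast; omega,
            show ((1 : ℤ) - (n : ℤ)) = -(((m + 1 : ℕ)) : ℤ) by push_cast; omega]
        rw [hTa, hTb, hK, hK, hav, hbv]
        by_cases hjm : (j : ℕ) = m + 1
        · rw [if_pos (Fin.ext (by omega)),
            show max m (j : ℕ) = m + 1 by omega,
            show max (m + 1) (j : ℕ) = m + 1 by omega]
          simp only [zpow_neg, zpow_natCast]
          field_simp [sub_ne_zero.mpr (ne_of_gt hα1)]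
          ring
        · rw [if_neg (fun h => hjm (by rw [← Fin.ext_iff.mp h]; omega)),
            show max m (j : ℕ) = m by omega,
            show max (m + 1) (j : ℕ) = m + 1 by omega]
          simp only [zpow_neg, zpow_natCast]
          field_simp
          ring
      · -- middle rows
        obtain ⟨m, hm⟩ : ∃ m, (i : ℕ) = m + 1 := ⟨(i : ℕ) - 1, by omega⟩
        have hmn : m + 3 ≤ n := by omega
        set a : Fin n := ⟨m, by omega⟩ with ha
        set b : Fin n := ⟨m + 1, by omega⟩ with hb
        set c : Fin n := ⟨m + 2, by omega⟩ with hc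
        have hav : (a : ℕ) = m := rfl
        have hbv : (b : ℕ) = m + 1 := rfl
        have hcv : (c : ℕ) = m + 2 := rfl
        rw [sum3_aux _ a b c (by simp [ha, hb, Fin.ext_iff])
          (by simp [ha, hc, Fin.ext_iff]) (by simp [hb, hc, Fin.ext_iff])
          (fun k hka hkb hkc => by
            have hkn : (k : ℕ) < n := k.isLt
            have hka' : (k : ℕ) ≠ m := fun h => hka (Fin.ext (h.trans hav.symm))
            have hkb' : (k : ℕ) ≠ m + 1 := fun h => hkb (Fin.ext (h.trans hbv.symm))
            have hkc' : (k : ℕ) ≠ m + 2 := fun h => hkc (Fin.ext (h.trans hcv.symm))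
            rw [hT, if_neg (by omega), if_neg (by omega), zero_mul])]
        have hTa : T i a = -(1 / (α - α ^ 2)) * α ^ (-((m : ℕ) : ℤ)) := by
          rw [hT, if_neg (by omega), if_pos (by omega),
            show min (i : ℕ) (a : ℕ) = m by omega]
        have hTb : T i b = (1 / (α - α ^ 2)) *
            (α ^ (-((m : ℕ) : ℤ)) + α ^ (-(((m + 1 : ℕ)) : ℤ))) := by
          rw [hT, if_pos (by omega), if_neg (by omega), if_neg (by omega),
            show ((1 : ℤ) - ((i : ℕ) : ℤ)) = -((m : ℕ) : ℤ) by push_cast; omega,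
            show (-((i : ℕ) : ℤ)) = -(((m + 1 : ℕ)) : ℤ) by push_cast; omega]
        have hTc : T i c = -(1 / (α - α ^ 2)) * α ^ (-(((m + 1 : ℕ)) : ℤ)) := by
          rw [hT, if_neg (by omega), if_pos (by omega),
            show min (i : ℕ) (c : ℕ) = m + 1 by omega]
        rw [hTa, hTb, hTc, hK, hK, hK, hav, hbv, hcv]
        rcases lt_trichotomy (j : ℕ) (m + 1) with hj | hj | hj
        · rw [if_neg (fun h => by rw [← Fin.ext_iff.mp h] at hj; omega),
            show max m (j : ℕ) = m by omega,
            show max (m + 1) (j : ℕ) = m + 1 by omega,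
            show max (m + 2) (j : ℕ) = m + 2 by omega]
          simp only [zpow_neg, zpow_natCast]
          field_simp
          ring
        · rw [if_pos (Fin.ext (by omega)),
            show max m (j : ℕ) = m + 1 by omega,
            show max (m + 1) (j : ℕ) = m + 1 by omega,
            show max (m + 2) (j : ℕ) = m + 2 by omega]
          simp only [zpow_neg, zpow_natCast]
          field_simp [sub_ne_zero.mpr (ne_of_gt hα1)]
          ring
        · rw [if_neg (fun h => by rw [← Fin.ext_iff.mp h] at hj; omega),
            show max m (j : ℕ) = (j : ℕ) by omega,
            show max (m + 1) (j : ℕ) = (j : ℕ) by omega,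
            show max (m + 2) (j : ℕ) = (j : ℕ) by omega]
          simp only [zpow_neg, zpow_natCast]
          ring
  exact ⟨Matrix.isUnit_det_of_left_inverse key, Matrix.inv_eq_left_inv key⟩
end

section
/- Let 0 < α < 1 and n ≥ 1. Then K is invertible and its inverse is tridiagonal: (K⁻¹)_{ij} = 0 whenever |i − j| > 1. -/
open Matrix Finset

namespace Stmt2Aux

variable (n : ℕ) (α : ℝ)

/-- Upper triangular matrix of ones. -/
def U : Matrix (Fin n) (Fin n) ℝ := of fun i j => if (i : ℕ) ≤ (j : ℕ) then 1 else 0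

/-- Inverse of `U`: bidiagonal. -/
def C : Matrix (Fin n) (Fin n) ℝ := of fun i j =>
  (if (i : ℕ) = (j : ℕ) then 1 else 0) - (if (i : ℕ) + 1 = (j : ℕ) then 1 else 0)

/-- Diagonal weights. -/
def w : ℕ → ℝ := fun k => if k = n - 1 then α ^ n else α ^ (k + 1) - α ^ (k + 2)

lemma w_ne (hα0 : 0 < α) (hα1 : α < 1) (k : ℕ) : w n α k ≠ 0 := by
  unfold w
  split_ifs
  · positivity
  · have h : α ^ (k + 2) < α ^ (k + 1) :=
      pow_lt_pow_right_of_lt_one₀ hα0 hα1 (by omega)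
    nlinarith

lemma sum_w (hn : 1 ≤ n) (m : ℕ) (hm : m < n) :
    ∑ k ∈ Finset.Ico m n, w n α k = α ^ (m + 1) := by
  obtain ⟨N, rfl⟩ : ∃ N, n = N + 1 := ⟨n - 1, by omega⟩
  have hmN : m ≤ N := by omega
  rw [Finset.sum_Ico_succ_top hmN]
  have h1 : ∑ k ∈ Finset.Ico m N, w (N + 1) α k
      = ∑ k ∈ Finset.Ico m N, (α ^ (k + 1) - α ^ (k + 1 + 1)) := by
    apply Finset.sum_congr rfl
    intro k hk
    rw [Finset.mem_Ico] at hk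
    unfold w
    rw [if_neg (by omega)]
  rw [h1]
  rw [Finset.sum_Ico_eq_sub _ hmN]
  rw [Finset.sum_range_sub' (fun k => α ^ (k + 1)) N,
    Finset.sum_range_sub' (fun k => α ^ (k + 1)) m]
  unfold w
  rw [if_pos (by omega)]
  ring

lemma CU : C n * U n = 1 := by
  ext i j
  rw [Matrix.mul_apply, Matrix.one_apply]
  have hterm : ∀ k : Fin n, C n i k * U n k j =
      (if i = k then U n k j else 0) - (if (i : ℕ) + 1 = (k : ℕ) then U n k j else 0) := by
    intro k
    simp only [C, of_apply, sub_mul, Fin.ext_iff]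
    split_ifs <;> ring
  rw [Finset.sum_congr rfl fun k _ => hterm k, Finset.sum_sub_distrib,
    Finset.sum_ite_eq Finset.univ i (fun k => U n k j)]
  by_cases h : (i : ℕ) + 1 < n
  · have h2 : ∑ k : Fin n, (if (i : ℕ) + 1 = (k : ℕ) then U n k j else 0)
        = U n ⟨(i : ℕ) + 1, h⟩ j := by
      rw [Finset.sum_eq_single (⟨(i : ℕ) + 1, h⟩ : Fin n)]
      · rw [if_pos rfl]
      · intro b _ hb
        rw [if_neg]
        intro hc
        exact hb (by simp [Fin.ext_iff, ← hc])
      · intro hmem; exact absurd (Finset.mem_univ _) hmem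
    rw [h2]
    simp only [U, of_apply, Finset.mem_univ, if_true, Fin.ext_iff]
    have hj := j.isLt
    split_ifs <;> first | omega | norm_num
  · have h2 : ∑ k : Fin n, (if (i : ℕ) + 1 = (k : ℕ) then U n k j else 0) = 0 := by
      apply Finset.sum_eq_zero
      intro k _
      rw [if_neg]
      have := k.isLt
      omega
    rw [h2]
    simp only [U, of_apply, Finset.mem_univ, if_true, Fin.ext_iff]
    have hj := j.isLt
    have hi := i.isLt
    split_ifs <;> first | omega | norm_num

lemma UC : U n * C n = 1 := mul_eq_one_comm.mp (CU n)

lemma factor (hn : 1 ≤ n) (hα0 : 0 < α) (hα1 : α < 1)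
    (K : Matrix (Fin n) (Fin n) ℝ)
    (hK : ∀ i j : Fin n, K i j = α ^ (max (i : ℕ) (j : ℕ) + 1)) :
    K = U n * Matrix.diagonal (fun k : Fin n => w n α k) * (U n)ᵀ := by
  ext i j
  rw [hK]
  rw [Matrix.mul_apply]
  have hterm : ∀ k : Fin n, (U n * Matrix.diagonal (fun k : Fin n => w n α k)) i k * (U n)ᵀ k j
      = (fun k : ℕ => if max (i : ℕ) (j : ℕ) ≤ k then w n α k else 0) (k : ℕ) := by
    intro k
    rw [Matrix.mul_diagonal, Matrix.transpose_apply]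
    simp only [U, of_apply]
    split_ifs <;> first | (exfalso; omega) | ring
  rw [Finset.sum_congr rfl fun k _ => hterm k]
  rw [Fin.sum_univ_eq_sum_range (fun k : ℕ => if max (i : ℕ) (j : ℕ) ≤ k then w n α k else 0) n]
  rw [← Finset.sum_filter]
  have hfil : Finset.filter (fun k => max (i : ℕ) (j : ℕ) ≤ k) (Finset.range n)
      = Finset.Ico (max (i : ℕ) (j : ℕ)) n := by
    ext k
    simp only [Finset.mem_filter, Finset.mem_range, Finset.mem_Ico]
    omega
  rw [hfil, sum_w n α hn _ (by have := i.isLt; have := j.isLt; omega)]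

end Stmt2Aux

/-- The first-order stable spline kernel `K` (entries `K_{ij} = α^{max(i,j)}`,
1-indexed) is invertible and its inverse is tridiagonal:
`(K⁻¹)_{ij} = 0` whenever `|i − j| > 1`. -/
theorem stmt_2 (n : ℕ) (hn : 1 ≤ n) (α : ℝ) (hα0 : 0 < α) (hα1 : α < 1)
    (K : Matrix (Fin n) (Fin n) ℝ)
    (hK : ∀ i j : Fin n, K i j = α ^ (max (i : ℕ) (j : ℕ) + 1)) :
    IsUnit K.det ∧ ∀ i j : Fin n, ((i : ℕ) + 1 < (j : ℕ) ∨ (j : ℕ) + 1 < (i : ℕ)) →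
      K⁻¹ i j = 0 := by
  classical
  open Stmt2Aux in
  set Uu := Stmt2Aux.U n with hUu
  set Cc := Stmt2Aux.C n with hCc
  set Dw : Matrix (Fin n) (Fin n) ℝ := Matrix.diagonal (fun k : Fin n => Stmt2Aux.w n α k)
    with hDw
  set Dw' : Matrix (Fin n) (Fin n) ℝ :=
    Matrix.diagonal (fun k : Fin n => (Stmt2Aux.w n α k)⁻¹) with hDw'
  set M := Ccᵀ * Dw' * Cc with hM
  have hfact : K = Uu * Dw * Uuᵀ := Stmt2Aux.factor n α hn hα0 hα1 K hK
  have hUtCt : Uuᵀ * Ccᵀ = 1 := by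
    rw [← Matrix.transpose_mul, Stmt2Aux.CU n, Matrix.transpose_one]
  have hDD : Dw * Dw' = 1 := by
    rw [hDw, hDw', Matrix.diagonal_mul_diagonal]
    have hfun : (fun k : Fin n => Stmt2Aux.w n α k * (Stmt2Aux.w n α k)⁻¹)
        = fun _ : Fin n => (1 : ℝ) :=
      funext fun k => mul_inv_cancel₀ (Stmt2Aux.w_ne n α hα0 hα1 k)
    rw [hfun, Matrix.diagonal_one]
  have hKM : K * M = 1 := by
    rw [hfact, hM]
    calc Uu * Dw * Uuᵀ * (Ccᵀ * Dw' * Cc)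
        = Uu * (Dw * ((Uuᵀ * Ccᵀ) * (Dw' * Cc))) := by
          simp only [Matrix.mul_assoc]
      _ = Uu * (Dw * (Dw' * Cc)) := by rw [hUtCt, one_mul]
      _ = Uu * ((Dw * Dw') * Cc) := by rw [Matrix.mul_assoc]
      _ = Uu * Cc := by rw [hDD, one_mul]
      _ = 1 := Stmt2Aux.UC n
  refine ⟨Matrix.isUnit_det_of_right_inverse hKM, ?_⟩
  intro i j hij
  rw [Matrix.inv_eq_right_inv hKM, hM, Matrix.mul_apply]
  apply Finset.sum_eq_zero
  intro k _
  have hzero : Cc k i = 0 ∨ Cc k j = 0 := by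
    by_cases h : (k : ℕ) = (i : ℕ) ∨ (k : ℕ) + 1 = (i : ℕ)
    · right
      simp only [hCc, Stmt2Aux.C, Matrix.of_apply]
      rw [if_neg (by omega), if_neg (by omega)]
      ring
    · left
      push_neg at h
      simp only [hCc, Stmt2Aux.C, Matrix.of_apply]
      rw [if_neg h.1, if_neg h.2]
      ring
  have happ : ((Ccᵀ * Dw') i k) = Cc k i * (Stmt2Aux.w n α k)⁻¹ := by
    rw [hDw', Matrix.mul_diagonal, Matrix.transpose_apply]
  rw [happ]
  rcases hzero with h | h <;> rw [h] <;> ring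
end

section
/- Let 0 < α < 1 and n ≥ 1. Then det(K) = (1 − α)^{n−1} · α^{n(n+1)/2}. -/
open Finset Matrix

private lemma tc_telescope (α : ℝ) (hα : α ≠ 0) (m : ℕ) :
    ∑ k ∈ Finset.range (m + 1),
      (if k = 0 then (1 : ℝ) else 1 - α) / α ^ (k + 1) = 1 / α ^ (m + 1) := by
  induction m with
  | zero => simp
  | succ m ih =>
    rw [Finset.sum_range_succ, ih]
    have h1 : α ^ (m + 1) ≠ 0 := pow_ne_zero _ hα
    have h2 : α ^ (m + 1 + 1) ≠ 0 := pow_ne_zero _ hα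
    simp only [Nat.succ_ne_zero, if_neg, ↓reduceIte]
    field_simp
    ring

private lemma tc_prod (x : ℝ) (n : ℕ) :
    ∏ i ∈ Finset.range n, (if i = 0 then (1 : ℝ) else x) =
      if n = 0 then 1 else x ^ (n - 1) := by
  induction n with
  | zero => simp
  | succ n ih =>
    rw [Finset.prod_range_succ, ih]
    cases n with
    | zero => simp
    | succ m => simp [pow_succ]

/-- The determinant of the first-order stable spline kernel `K`
(entries `K_{ij} = α^{max(i,j)}`, 1-indexed) equals
`(1 − α)^{n−1} · α^{n(n+1)/2}`. -/
theorem stmt_3 (n : ℕ) (hn : 1 ≤ n) (α : ℝ) (hα0 : 0 < α) (hα1 : α < 1)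
    (K : Matrix (Fin n) (Fin n) ℝ)
    (hK : ∀ i j : Fin n, K i j = α ^ (max (i : ℕ) (j : ℕ) + 1)) :
    K.det = (1 - α) ^ (n - 1) * α ^ (n * (n + 1) / 2) := by
  have hα : α ≠ 0 := ne_of_gt hα0
  set c : ℕ → ℝ := fun k => if k = 0 then 1 else 1 - α with hc
  set A : Matrix (Fin n) (Fin n) ℝ :=
    fun i k => if (k : ℕ) ≤ (i : ℕ) then α ^ ((i : ℕ) + 1) * (c k / α ^ ((k : ℕ) + 1)) else 0
    with hA
  set B : Matrix (Fin n) (Fin n) ℝ :=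
    fun k j => if (k : ℕ) ≤ (j : ℕ) then α ^ ((j : ℕ) + 1) else 0 with hB
  have key : K = A * B := by
    ext i j
    rw [hK, Matrix.mul_apply]
    set m : ℕ := min (i : ℕ) (j : ℕ) with hm
    have hsum : ∀ k : Fin n, A i k * B k j =
        (fun t : ℕ => if t ≤ m then α ^ ((i : ℕ) + 1) * α ^ ((j : ℕ) + 1) * (c t / α ^ (t + 1))
          else 0) (k : ℕ) := by
      intro k
      simp only [hA, hB, hm]
      by_cases h1 : (k : ℕ) ≤ (i : ℕ) <;> by_cases h2 : (k : ℕ) ≤ (j : ℕ) <;>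
        simp [h1, h2, le_min_iff] <;> ring
    have hrw : (∑ k : Fin n, A i k * B k j) = ∑ t ∈ Finset.range n,
        (if t ≤ m then α ^ ((i : ℕ) + 1) * α ^ ((j : ℕ) + 1) * (c t / α ^ (t + 1)) else 0) := by
      rw [Finset.sum_congr rfl (fun k _ => hsum k)]
      exact Fin.sum_univ_eq_sum_range (fun t => if t ≤ m then α ^ ((i : ℕ) + 1) * α ^ ((j : ℕ) + 1) * (c t / α ^ (t + 1)) else 0) n
    rw [hrw]
    have hmn : m + 1 ≤ n := by
      have := i.isLt
      omega
    rw [← Finset.sum_subset (Finset.range_subset_range.mpr hmn)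
      (by intro t _ ht; simp only [Finset.mem_range] at ht; simp [Nat.lt_succ_iff] at ht ⊢; omega)]
    have : ∑ t ∈ Finset.range (m + 1),
        (if t ≤ m then α ^ ((i : ℕ) + 1) * α ^ ((j : ℕ) + 1) * (c t / α ^ (t + 1)) else 0)
        = α ^ ((i : ℕ) + 1) * α ^ ((j : ℕ) + 1) * ∑ t ∈ Finset.range (m + 1), c t / α ^ (t + 1) := by
      rw [Finset.mul_sum]
      refine Finset.sum_congr rfl fun t htm => ?_
      simp only [Finset.mem_range, Nat.lt_succ_iff] at htm
      simp [htm]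
    rw [this, hc, tc_telescope α hα m]
    have hsplit : (i : ℕ) + 1 + ((j : ℕ) + 1) = (m + 1) + (max (i : ℕ) (j : ℕ) + 1) := by
      simp only [hm]; omega
    have : α ^ ((i : ℕ) + 1) * α ^ ((j : ℕ) + 1) = α ^ (m + 1) * α ^ (max (i : ℕ) (j : ℕ) + 1) := by
      rw [← pow_add, ← pow_add, hsplit]
    rw [this]
    field_simp
  rw [key, Matrix.det_mul]
  have hAtri : A.BlockTriangular OrderDual.toDual := by
    intro i k h
    simp only [OrderDual.toDual_lt_toDual] at h
    simp only [hA]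
    rw [if_neg (by exact_mod_cast not_le.mpr (Fin.lt_iff_val_lt_val.mp h))]
  have hBtri : B.BlockTriangular id := by
    intro k j h
    simp only [id] at h
    simp only [hB]
    rw [if_neg (by exact_mod_cast not_le.mpr (Fin.lt_iff_val_lt_val.mp h))]
  rw [Matrix.det_of_lowerTriangular A hAtri, Matrix.det_of_upperTriangular hBtri]
  have hAdiag : ∏ i : Fin n, A i i = (1 - α) ^ (n - 1) := by
    have : ∀ i : Fin n, A i i = c (i : ℕ) := by
      intro i
      simp only [hA, le_refl, if_pos]
      field_simp
    rw [Finset.prod_congr rfl (fun i _ => this i), hc]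
    rw [show (∏ i : Fin n, (fun k => if k = 0 then (1:ℝ) else 1 - α) (i : ℕ)) =
        ∏ t ∈ Finset.range n, (if t = 0 then (1:ℝ) else 1 - α) from
      Fin.prod_univ_eq_prod_range (fun t => if t = 0 then (1:ℝ) else 1 - α) n, tc_prod]
    rw [if_neg (by omega)]
  have hBdiag : ∏ j : Fin n, B j j = α ^ (n * (n + 1) / 2) := by
    have : ∀ j : Fin n, B j j = α ^ ((j : ℕ) + 1) := by
      intro j
      simp [hB]
    rw [Finset.prod_congr rfl (fun j _ => this j)]
    rw [show (∏ j : Fin n, α ^ ((j : ℕ) + 1)) = ∏ t ∈ Finset.range n, α ^ (t + 1) from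
      Fin.prod_univ_eq_prod_range (fun t => α ^ (t + 1)) n, Finset.prod_pow_eq_pow_sum]
    congr 1
    have h1 : ∑ i ∈ Finset.range n, (i + 1) = ∑ i ∈ Finset.range (n + 1), i := by
      rw [Finset.sum_range_succ, Finset.sum_add_distrib, Finset.sum_const, smul_eq_mul,
        mul_one, Finset.card_range]
    rw [h1, Finset.sum_range_id, Nat.add_sub_cancel, Nat.mul_comm]
  rw [hAdiag, hBdiag]
end

section
/- Let 0 < α < 1 and n ≥ 2. Then for every row index i with 1 ≤ i ≤ n−1, the i-th row of K⁻¹ sums to zero: Σ_{j=1}^{n} (K⁻¹)_{ij} = 0. -/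
lemma tel_aux (α : ℝ) : ∀ N m : ℕ, m ≤ N →
    ∑ k ∈ Finset.range N, (if m ≤ k then α ^ (k + 1) - α ^ (k + 2) else 0)
      = α ^ (m + 1) - α ^ (N + 1) := by
  intro N
  induction N with
  | zero =>
    intro m hm
    interval_cases m
    simp
  | succ N ih =>
    intro m hm
    rw [Finset.sum_range_succ]
    rcases Nat.lt_or_ge m (N + 1) with h | h
    · have hmN : m ≤ N := Nat.lt_succ_iff.mp h
      rw [ih m hmN, if_pos hmN]
      ring
    · have hm' : m = N + 1 := le_antisymm hm h
      subst hm'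
      rw [if_neg (by omega)]
      rw [Finset.sum_eq_zero (fun k hk => by
        rw [if_neg (by simp only [Finset.mem_range] at hk; omega)])]
      ring

open Matrix

/-- For the first-order stable spline kernel `K` (entries `K_{ij} = α^{max(i,j)}`,
1-indexed) with `n ≥ 2`, each of the first `n − 1` rows of `K⁻¹` sums to zero. -/
theorem stmt_4 (n : ℕ) (hn : 2 ≤ n) (α : ℝ) (hα0 : 0 < α) (hα1 : α < 1)
    (K : Matrix (Fin n) (Fin n) ℝ)
    (hK : ∀ i j : Fin n, K i j = α ^ (max (i : ℕ) (j : ℕ) + 1)) :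
    ∀ i : Fin n, (i : ℕ) < n - 1 → ∑ j : Fin n, K⁻¹ i j = 0 := by
  have hn1 : n - 1 < n := by omega
  set last : Fin n := ⟨n - 1, hn1⟩ with hlast
  -- the diagonal entries
  set d : Fin n → ℝ := fun k =>
    (α ^ ((k : ℕ) + 1) - α ^ ((k : ℕ) + 2)) +
      (if (k : ℕ) = n - 1 then α ^ (n + 1) else 0) with hd
  -- the triangular factor
  set U : Matrix (Fin n) (Fin n) ℝ :=
    Matrix.of (fun i k => if i ≤ k then (1 : ℝ) else 0) with hU
  -- key entrywise computation
  have key : ∀ i j : Fin n,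
      (U * Matrix.diagonal d * U.transpose) i j = α ^ (max (i : ℕ) (j : ℕ) + 1) := by
    intro i j
    have hm : max (i : ℕ) (j : ℕ) ≤ n - 1 := by
      have := i.isLt; have := j.isLt; omega
    rw [Matrix.mul_apply]
    have step : ∀ k : Fin n,
        (U * Matrix.diagonal d) i k * U.transpose k j
          = (fun k' : ℕ => if max (i : ℕ) (j : ℕ) ≤ k' then
              ((α ^ (k' + 1) - α ^ (k' + 2)) +
                (if k' = n - 1 then α ^ (n + 1) else 0)) else 0) ((k : ℕ)) := by
      intro k
      simp only [Matrix.mul_diagonal, Matrix.transpose_apply, hU, Matrix.of_apply, hd]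
      by_cases h1 : i ≤ k
      · by_cases h2 : j ≤ k
        · rw [if_pos h1, if_pos h2,
            if_pos (max_le_iff.mpr ⟨Fin.le_def.mp h1, Fin.le_def.mp h2⟩)]
          ring
        · rw [if_pos h1, if_neg h2,
            if_neg (fun hc => h2 (Fin.le_def.mpr (le_trans (le_max_right _ _) hc)))]
          ring
      · rw [if_neg h1,
          if_neg (fun hc => h1 (Fin.le_def.mpr (le_trans (le_max_left _ _) hc)))]
        ring
    have conv1 := Fin.sum_univ_eq_sum_range
      (fun k' : ℕ => if max (i : ℕ) (j : ℕ) ≤ k' then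
          ((α ^ (k' + 1) - α ^ (k' + 2)) +
            (if k' = n - 1 then α ^ (n + 1) else 0)) else 0) n
    rw [Finset.sum_congr rfl (fun k _ => step k), conv1]
    have split : ∀ k' : ℕ,
        (if max (i : ℕ) (j : ℕ) ≤ k' then
            ((α ^ (k' + 1) - α ^ (k' + 2)) +
              (if k' = n - 1 then α ^ (n + 1) else 0)) else 0)
          = (if max (i : ℕ) (j : ℕ) ≤ k' then α ^ (k' + 1) - α ^ (k' + 2) else 0) +
            (if max (i : ℕ) (j : ℕ) ≤ k' then
              (if k' = n - 1 then α ^ (n + 1) else 0) else 0) := by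
      intro k'
      split <;> simp
    rw [Finset.sum_congr rfl (fun k _ => split k), Finset.sum_add_distrib,
      tel_aux α n _ (by omega)]
    have single : ∑ k ∈ Finset.range n,
        (if max (i : ℕ) (j : ℕ) ≤ k then
          (if k = n - 1 then α ^ (n + 1) else 0) else 0) = α ^ (n + 1) := by
      rw [Finset.sum_eq_single_of_mem (n - 1) (Finset.mem_range.mpr hn1)]
      · rw [if_pos hm, if_pos rfl]
      · intro k _ hk
        rw [if_neg hk]
        split <;> rfl
    rw [single]
    ring
  have hfact : K = U * Matrix.diagonal d * U.transpose := by
    ext i j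
    rw [hK i j]
    exact (key i j).symm
  -- d is positive
  have hdpos : ∀ k : Fin n, 0 < d k := by
    intro k
    have h1 : (0:ℝ) < α ^ ((k : ℕ) + 1) := pow_pos hα0 _
    have h2 : α ^ ((k : ℕ) + 2) < α ^ ((k : ℕ) + 1) := by
      calc α ^ ((k : ℕ) + 2) = α ^ ((k : ℕ) + 1) * α := by ring
      _ < α ^ ((k : ℕ) + 1) * 1 := by
          exact mul_lt_mul_of_pos_left hα1 h1
      _ = α ^ ((k : ℕ) + 1) := mul_one _
    have h3 : (0:ℝ) ≤ (if (k : ℕ) = n - 1 then α ^ (n + 1) else 0) := by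
      split
      · exact le_of_lt (pow_pos hα0 _)
      · exact le_refl 0
    simp only [hd]
    linarith
  -- determinant of U is 1
  have hUtri : U.BlockTriangular id := by
    intro i j hij
    simp only [hU, Matrix.of_apply]
    exact if_neg (not_le.mpr hij)
  have hUdet : U.det = 1 := by
    rw [Matrix.det_of_upperTriangular hUtri]
    apply Finset.prod_eq_one
    intro i _
    simp [hU]
  have hKdet : IsUnit K.det := by
    rw [hfact, Matrix.det_mul, Matrix.det_mul, hUdet, Matrix.det_transpose, hUdet,
      Matrix.det_diagonal]
    simp only [one_mul, mul_one]
    exact isUnit_iff_ne_zero.mpr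
      (ne_of_gt (Finset.prod_pos (fun k _ => hdpos k)))
  have hinv : K⁻¹ * K = 1 := Matrix.nonsing_inv_mul K hKdet
  intro i hi
  have hine : i ≠ last := by
    intro h
    rw [h] at hi
    simp only [hlast] at hi
    omega
  set u : Fin n → ℝ := fun k => if k = last then (α ^ n)⁻¹ else 0 with hu
  have hKu : K *ᵥ u = fun _ => (1 : ℝ) := by
    funext r
    have hr : max (r : ℕ) ((last : ℕ)) = n - 1 := by
      have := r.isLt; simp only [hlast]; omega
    simp only [Matrix.mulVec, dotProduct, hu, mul_ite, mul_zero,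
      Finset.sum_ite_eq', Finset.mem_univ, if_pos]
    rw [hK r last, hr]
    have : n - 1 + 1 = n := by omega
    rw [this]
    exact mul_inv_cancel₀ (ne_of_gt (pow_pos hα0 n))
  have hrow : ∑ j : Fin n, K⁻¹ i j = (K⁻¹ *ᵥ (fun _ => (1 : ℝ))) i := by
    simp [Matrix.mulVec, dotProduct]
  rw [hrow, ← hKu, Matrix.mulVec_mulVec, hinv, Matrix.one_mulVec]
  simp [hu, hine]
end

section
/- Let 0 < α < 1 and n ≥ 1, and let M be any n×n real symmetric positive semidefinite matrix satisfying the band constraints M_{ii} = α^{i} for 1 ≤ i ≤ n and M_{i,i+1} = M_{i+1,i} = α^{i+1} for 1 ≤ i ≤ n−1. Then det(M) ≤ det(K). In other words, the first-order stable spline kernel K is the maximum-entropy (maximum-determinant) completion of the partially specified 1-band matrix with band entries σ_{ij} = α^{max(i,j)} for |i − j| ≤ 1. -/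
open Matrix

noncomputable section

def blkEquiv (n : ℕ) : (Fin 1 ⊕ Fin (n+1)) ≃ Fin (n+2) :=
  finSumFinEquiv.trans (finCongr (by omega))

lemma blkEquiv_inl (n : ℕ) (i : Fin 1) : blkEquiv n (Sum.inl i) = 0 := by
  apply Fin.ext
  simp [blkEquiv, Fin.val_eq_zero i]

lemma blkEquiv_inr (n : ℕ) (j : Fin (n+1)) : blkEquiv n (Sum.inr j) = j.succ := by
  apply Fin.ext
  simp [blkEquiv]

lemma submatrix_blk (n : ℕ) (N : Matrix (Fin (n+2)) (Fin (n+2)) ℝ) :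
    N.submatrix (blkEquiv n) (blkEquiv n) =
      Matrix.fromBlocks (Matrix.of fun (_ _ : Fin 1) => N 0 0)
        (Matrix.of fun (_ : Fin 1) (j : Fin (n+1)) => N 0 j.succ)
        (Matrix.of fun (i : Fin (n+1)) (_ : Fin 1) => N i.succ 0)
        (Matrix.of fun (i j : Fin (n+1)) => N i.succ j.succ) := by
  ext i j
  cases i <;> cases j <;>
    simp [Matrix.submatrix_apply, blkEquiv_inl, blkEquiv_inr]

lemma det_blk (n : ℕ) (N : Matrix (Fin (n+2)) (Fin (n+2)) ℝ)
    (hD : IsUnit (Matrix.det (Matrix.of fun (i j : Fin (n+1)) => N i.succ j.succ))) :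
    N.det = (Matrix.of fun (i j : Fin (n+1)) => N i.succ j.succ).det *
      (N 0 0 - (fun k => N 0 k.succ) ⬝ᵥ
        ((Matrix.of fun (i j : Fin (n+1)) => N i.succ j.succ)⁻¹ *ᵥ (fun k => N k.succ 0))) := by
  set D := (Matrix.of fun (i j : Fin (n+1)) => N i.succ j.succ) with hDdef
  haveI : Invertible D := D.invertibleOfIsUnitDet hD
  rw [← Matrix.det_submatrix_equiv_self (blkEquiv n) N, submatrix_blk,
    Matrix.det_fromBlocks₂₂, Matrix.det_fin_one, Matrix.invOf_eq_nonsing_inv]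
  congr 1
  simp only [Matrix.sub_apply, Matrix.of_apply]
  congr 1
  simp only [Matrix.mul_apply, Matrix.mulVec, dotProduct, Matrix.of_apply,
    Finset.mul_sum, Finset.sum_mul]
  rw [Finset.sum_comm]
  apply Finset.sum_congr rfl
  intro j _
  apply Finset.sum_congr rfl
  intro k _
  ring

def Kdet (α : ℝ) : ℕ → ℝ
  | 0 => 1
  | 1 => α
  | (n+2) => α^(n+1) * (α - α^2) * Kdet α (n+1)

lemma Kdet_pos {α : ℝ} (h0 : 0 < α) (h1 : α < 1) : ∀ n, 0 < Kdet α n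
  | 0 => one_pos
  | 1 => h0
  | (n+2) => by
    have := Kdet_pos h0 h1 (n+1)
    have h2 : 0 < α - α^2 := by nlinarith
    have : 0 < α^(n+1) := pow_pos h0 _
    simp only [Kdet]
    positivity

lemma K_det {α : ℝ} (h0 : 0 < α) (h1 : α < 1) :
    ∀ n (K : Matrix (Fin n) (Fin n) ℝ),
      (∀ i j : Fin n, K i j = α ^ (max (i : ℕ) (j : ℕ) + 1)) → K.det = Kdet α n
  | 0, K, hK => by simp [Kdet, Matrix.det_fin_zero]
  | 1, K, hK => by simp [Kdet, Matrix.det_fin_one, hK]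
  | (n+2), K, hK => by
    set D := (Matrix.of fun (i j : Fin (n+1)) => K i.succ j.succ) with hDdef
    have hDeq : D = α • (Matrix.of fun (i j : Fin (n+1)) =>
        α ^ (max (i : ℕ) (j : ℕ) + 1)) := by
      ext i j
      simp only [hDdef, Matrix.of_apply, Matrix.smul_apply, smul_eq_mul, hK, Fin.val_succ]
      rw [show max ((i:ℕ)+1) ((j:ℕ)+1) = max (i:ℕ) (j:ℕ) + 1 by omega]
      ring
    have hdetD : D.det = α^(n+1) * Kdet α (n+1) := by
      have hrec := K_det h0 h1 (n+1)
        (Matrix.of fun (i j : Fin (n+1)) => α ^ (max (i : ℕ) (j : ℕ) + 1)) (fun i j => rfl)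
      rw [hDeq, Matrix.det_smul, hrec]
      simp
    have hDunit : IsUnit D.det := by
      rw [hdetD]
      exact (mul_pos (pow_pos h0 _) (Kdet_pos h0 h1 _)).ne'.isUnit
    have hv : D *ᵥ Pi.single (0 : Fin (n+1)) (1:ℝ) = (fun k => K k.succ 0) := by
      ext k
      simp only [Matrix.mulVec_single, mul_one, hDdef, Matrix.of_apply, hK]
      congr 1
      simp [Fin.val_succ]
    have hsolve : D⁻¹ *ᵥ (fun k : Fin (n+1) => K k.succ 0) = Pi.single (0 : Fin (n+1)) (1:ℝ) := by
      rw [← hv, Matrix.mulVec_mulVec, Matrix.nonsing_inv_mul _ hDunit, Matrix.one_mulVec]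
    rw [det_blk n K hDunit]
    rw [← hDdef, hsolve, hdetD]
    have : (fun k : Fin (n+1) => K 0 k.succ) ⬝ᵥ Pi.single (0 : Fin (n+1)) (1:ℝ) = α^2 := by
      rw [dotProduct_single, mul_one, hK]
      norm_num
    rw [this, hK]
    simp only [Kdet]
    norm_num
    ring

lemma M_bound {α : ℝ} (h0 : 0 < α) (h1 : α < 1) :
    ∀ n (M : Matrix (Fin (n+1)) (Fin (n+1)) ℝ), M.PosSemidef →
      (∀ i : Fin (n+1), M i i = α ^ ((i : ℕ) + 1)) →
      (∀ i j : Fin (n+1), (i : ℕ) + 1 = (j : ℕ) →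
        M i j = α ^ ((j : ℕ) + 1) ∧ M j i = α ^ ((j : ℕ) + 1)) →
      M.det ≤ Kdet α (n+1)
  | 0, M, hM, hdiag, hoff => by
    rw [Matrix.det_fin_one, hdiag 0]
    simp [Kdet]
  | (n+1), M, hM, hdiag, hoff => by
    have hα : α ≠ 0 := h0.ne'
    set D := (Matrix.of fun (i j : Fin (n+1)) => M i.succ j.succ) with hDdef
    have hDpsd : D.PosSemidef := hM.submatrix Fin.succ
    have hKpos := Kdet_pos h0 h1 (n+2)
    by_cases hdet : D.det = 0
    · -- M is singular
      obtain ⟨x, hx0, hDx⟩ := Matrix.exists_mulVec_eq_zero_iff.mpr hdet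
      set y : Fin (n+2) → ℝ := Fin.cons 0 x with hy
      have hquad : star y ⬝ᵥ M *ᵥ y = 0 := by
        rw [star_trivial]
        have hMy : ∀ k : Fin (n+1), (M *ᵥ y) k.succ = (D *ᵥ x) k := by
          intro k
          simp only [Matrix.mulVec, dotProduct, hy]
          rw [Fin.sum_univ_succ]
          simp [hDdef]
        simp only [dotProduct]
        rw [Fin.sum_univ_succ]
        simp only [hy, Fin.cons_zero, Fin.cons_succ, zero_mul, zero_add]
        rw [Finset.sum_eq_zero]
        intro k _
        rw [← hy, hMy k, hDx]
        simp
      have hMy0 : M *ᵥ y = 0 := (hM.dotProduct_mulVec_zero_iff y).mp hquad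
      have hy0 : y ≠ 0 := by
        intro h
        apply hx0
        funext k
        have := congrFun h k.succ
        simpa [hy] using this
      have : M.det = 0 := Matrix.exists_mulVec_eq_zero_iff.mp ⟨y, hy0, hMy0⟩
      rw [this]
      exact hKpos.le
    · -- D invertible case
      have hDunit : IsUnit D.det := hdet |> Ne.intro |> fun h => isUnit_iff_ne_zero.mpr hdet
      have hDpd : D.PosDef := by
        refine Matrix.posDef_iff_dotProduct_mulVec.mpr ⟨hDpsd.1, fun x hx => ?_⟩
        rcases lt_or_eq_of_le (hDpsd.dotProduct_mulVec_nonneg x) with h | h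
        · exact h
        · exfalso
          apply hdet
          apply Matrix.exists_mulVec_eq_zero_iff.mp
          exact ⟨x, hx, (hDpsd.dotProduct_mulVec_zero_iff x).mp h.symm⟩
      have hDdetpos : 0 < D.det := hDpd.det_pos
      -- entries
      have hM00 : M 0 0 = α ^ 1 := by simpa using hdiag 0
      have h01 : M 0 1 = α ^ 2 ∧ M 1 0 = α ^ 2 := by
        have := hoff 0 1 (by simp)
        simpa using this
      have hM11 : M 1 1 = α ^ 2 := by
        have := hdiag 1
        simpa using this
      -- symmetry of M
      have hsym : ∀ i j : Fin (n+2), M i j = M j i := by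
        intro i j
        have := congrFun (congrFun hM.1 i) j
        simpa [Matrix.conjTranspose_apply] using this.symm
      set v : Fin (n+1) → ℝ := fun k => M k.succ 0 with hv
      have hrow : (fun k : Fin (n+1) => M 0 k.succ) = v := by
        funext k; rw [hv]; exact hsym 0 k.succ
      -- key quadratic inequality : α^2 ≤ v ⬝ᵥ D⁻¹ *ᵥ v
      set s : Fin (n+1) → ℝ := Pi.single (0 : Fin (n+1)) (1:ℝ) with hs
      have hDinv : D⁻¹.PosDef := hDpd.inv
      set u : Fin (n+1) → ℝ := v - D *ᵥ s with hu
      have hunn : 0 ≤ u ⬝ᵥ D⁻¹ *ᵥ u := by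
        have := hDinv.posSemidef.dotProduct_mulVec_nonneg u
        simpa [star_trivial] using this
      have hDsymm : Dᵀ = D := by
        ext i j
        simp only [Matrix.transpose_apply, hDdef, Matrix.of_apply]
        exact hsym _ _
      have hDinvDv : D⁻¹ *ᵥ (D *ᵥ s) = s := by
        rw [Matrix.mulVec_mulVec, Matrix.nonsing_inv_mul _ hDunit, Matrix.one_mulVec]
      have hDDinvv : D *ᵥ (D⁻¹ *ᵥ v) = v := by
        rw [Matrix.mulVec_mulVec, Matrix.mul_nonsing_inv _ hDunit, Matrix.one_mulVec]
      have hDs0 : (D *ᵥ s) ⬝ᵥ s = α ^ 2 := by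
        simp only [hs, dotProduct_single, Matrix.mulVec_single, mul_one]
        simpa [hDdef] using hM11
      have hvs : v ⬝ᵥ s = α ^ 2 := by
        rw [hs, dotProduct_single, mul_one, hv]
        simpa using h01.2
      have hcross : (D *ᵥ s) ⬝ᵥ (D⁻¹ *ᵥ v) = α ^ 2 := by
        rw [dotProduct_comm, Matrix.dotProduct_mulVec, ← Matrix.mulVec_transpose,
          hDsymm, hDDinvv, hvs]
      have hkey : α ^ 2 ≤ v ⬝ᵥ D⁻¹ *ᵥ v := by
        have hexp : u ⬝ᵥ D⁻¹ *ᵥ u = v ⬝ᵥ D⁻¹ *ᵥ v - v ⬝ᵥ s - ((D *ᵥ s) ⬝ᵥ (D⁻¹ *ᵥ v) - (D *ᵥ s) ⬝ᵥ s) := by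
          rw [hu, Matrix.mulVec_sub, hDinvDv, sub_dotProduct, dotProduct_sub,
            dotProduct_sub]
        rw [hexp, hcross, hDs0, hvs] at hunn
        linarith
      -- determinant formula
      have hdetM : M.det = D.det * (α ^ 1 - v ⬝ᵥ D⁻¹ *ᵥ v) := by
        rw [det_blk n M hDunit, ← hDdef, hM00, hrow]
      -- bound on det D via induction
      set M' : Matrix (Fin (n+1)) (Fin (n+1)) ℝ := α⁻¹ • D with hM'
      have hM'psd : M'.PosSemidef := by
        rw [Matrix.posSemidef_iff_dotProduct_mulVec]
        constructor
        · show M'ᴴ = M'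
          ext i j
          simp only [hM', Matrix.conjTranspose_apply, Matrix.smul_apply, smul_eq_mul,
            star_trivial, hDdef, Matrix.of_apply]
          rw [hsym]
        · intro x
          have := hDpsd.dotProduct_mulVec_nonneg x
          simp only [hM', Matrix.smul_mulVec, dotProduct_smul, smul_eq_mul]
          positivity
      have hM'diag : ∀ i : Fin (n+1), M' i i = α ^ ((i : ℕ) + 1) := by
        intro i
        have hd := hdiag i.succ
        simp only [Fin.val_succ] at hd
        simp only [hM', Matrix.smul_apply, hDdef, Matrix.of_apply, smul_eq_mul, hd]
        rw [pow_succ]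
        field_simp
      have hM'off : ∀ i j : Fin (n+1), (i : ℕ) + 1 = (j : ℕ) →
          M' i j = α ^ ((j : ℕ) + 1) ∧ M' j i = α ^ ((j : ℕ) + 1) := by
        intro i j hij
        have ho := hoff i.succ j.succ (by simp [Fin.val_succ, hij])
        simp only [Fin.val_succ] at ho
        constructor <;>
        · simp only [hM', Matrix.smul_apply, hDdef, Matrix.of_apply, smul_eq_mul,
            ho.1, ho.2]
          rw [pow_succ]
          field_simp
      have hIH : M'.det ≤ Kdet α (n+1) := M_bound h0 h1 n M' hM'psd hM'diag hM'off
      have hDM' : D = α • M' := by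
        rw [hM', smul_smul, mul_inv_cancel₀ hα, one_smul]
      have hdetD : D.det ≤ α ^ (n+1) * Kdet α (n+1) := by
        rw [hDM', Matrix.det_smul]
        simp only [Fintype.card_fin]
        exact mul_le_mul_of_nonneg_left hIH (pow_nonneg h0.le _)
      have hαα : (0:ℝ) ≤ α - α ^ 2 := by nlinarith
      calc M.det = D.det * (α ^ 1 - v ⬝ᵥ D⁻¹ *ᵥ v) := hdetM
        _ ≤ D.det * (α ^ 1 - α ^ 2) := by
            apply mul_le_mul_of_nonneg_left _ hDdetpos.le
            linarith
        _ ≤ (α ^ (n+1) * Kdet α (n+1)) * (α ^ 1 - α ^ 2) := by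
            apply mul_le_mul_of_nonneg_right hdetD
            simpa using hαα
        _ = Kdet α (n+2) := by
            simp only [Kdet]
            ring

end



/-- The first-order stable spline kernel `K` (entries `K_{ij} = α^{max(i,j)}`,
1-indexed) is the maximum-determinant (maximum-entropy) completion of the
1-band data `σ_{ij} = α^{max(i,j)}`, `|i − j| ≤ 1`: any symmetric positive
semidefinite matrix `M` with `M_{ii} = α^i` and `M_{i,i+1} = M_{i+1,i} = α^{i+1}`
satisfies `det(M) ≤ det(K)`. -/
theorem stmt_5 (n : ℕ) (hn : 1 ≤ n) (α : ℝ) (hα0 : 0 < α) (hα1 : α < 1)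
    (K : Matrix (Fin n) (Fin n) ℝ)
    (hK : ∀ i j : Fin n, K i j = α ^ (max (i : ℕ) (j : ℕ) + 1))
    (M : Matrix (Fin n) (Fin n) ℝ) (hM : M.PosSemidef)
    (hdiag : ∀ i : Fin n, M i i = α ^ ((i : ℕ) + 1))
    (hoff : ∀ i j : Fin n, (i : ℕ) + 1 = (j : ℕ) →
      M i j = α ^ ((j : ℕ) + 1) ∧ M j i = α ^ ((j : ℕ) + 1)) :
    M.det ≤ K.det := by
  rw [K_det hα0 hα1 n K hK]
  cases n with
  | zero => omega
  | succ m => exact M_bound hα0 hα1 m M hM hdiag hoff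
end

section
/- Let 0 < α < 1 and n ≥ 1, and let M be any n×n real symmetric positive semidefinite matrix satisfying M_{ii} = α^{i} for 1 ≤ i ≤ n and M_{i,i+1} = M_{i+1,i} = α^{i+1} for 1 ≤ i ≤ n−1. If det(M) = det(K), then M = K; that is, K is the unique maximum-determinant completion of the 1-band data σ_{ij} = α^{max(i,j)}, |i − j| ≤ 1. -/
open Matrix Finset



lemma amgm_eq_one {m : ℕ} (μ : Fin m → ℝ) (h0 : ∀ i, 0 ≤ μ i)
    (hsum : ∑ i, μ i = m) (hprod : ∏ i, μ i = 1) : ∀ i, μ i = 1 := by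
  have hle : ∀ i : Fin m, μ i ≤ Real.exp (μ i - 1) := fun i => by
    have := Real.add_one_le_exp (μ i - 1); linarith
  have hexp : ∏ i, Real.exp (μ i - 1) = 1 := by
    rw [← Real.exp_sum, Finset.sum_sub_distrib]
    simp [hsum]
  have hpos : ∀ i : Fin m, 0 < μ i := by
    intro i
    rcases (h0 i).lt_or_eq with h | h
    · exact h
    · exfalso
      have h2 : ∏ j, μ j = 0 := Finset.prod_eq_zero (Finset.mem_univ i) h.symm
      rw [hprod] at h2; norm_num at h2
  by_contra hc
  push_neg at hc
  obtain ⟨i, hi⟩ := hc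
  have hlt : μ i < Real.exp (μ i - 1) := by
    have h := Real.add_one_lt_exp (x := μ i - 1) (by intro h; apply hi; linarith)
    linarith
  have := Finset.prod_lt_prod (f := μ) (g := fun i => Real.exp (μ i - 1))
    (fun j _ => hpos j) (fun j _ => hle j) ⟨i, Finset.mem_univ i, hlt⟩
  rw [hprod, hexp] at this
  exact lt_irrefl _ this

lemma psd_eq_one_of_trace_det {m : ℕ} (C : Matrix (Fin m) (Fin m) ℝ)
    (hC : C.PosSemidef) (htr : C.trace = m) (hdet : C.det = 1) : C = 1 := by
  have hH := hC.isHermitian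
  have hev0 : ∀ i, 0 ≤ hH.eigenvalues i := hC.eigenvalues_nonneg
  have hprod : ∏ i, hH.eigenvalues i = 1 := by
    have h := hH.det_eq_prod_eigenvalues
    rw [hdet] at h
    exact_mod_cast h.symm
  have hVV : star (hH.eigenvectorUnitary : Matrix (Fin m) (Fin m) ℝ) *
      (hH.eigenvectorUnitary : Matrix (Fin m) (Fin m) ℝ) = 1 :=
    (Matrix.mem_unitaryGroup_iff').mp (hH.eigenvectorUnitary).2
  have hsum : ∑ i, hH.eigenvalues i = m := by
    have hst := congrArg Matrix.trace hH.spectral_theorem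
    rw [htr, Unitary.conjStarAlgAut_apply, Matrix.trace_mul_cycle, hVV, Matrix.one_mul,
      Matrix.trace_diagonal] at hst
    exact_mod_cast hst.symm
  have hev1 : ∀ i, hH.eigenvalues i = 1 := amgm_eq_one _ hev0 hsum hprod
  have hdiag : (Matrix.diagonal (RCLike.ofReal ∘ hH.eigenvalues) :
      Matrix (Fin m) (Fin m) ℝ) = 1 := by
    rw [show (RCLike.ofReal ∘ hH.eigenvalues : Fin m → ℝ) = fun _ => 1 from
      funext fun i => by simp [hev1 i], Matrix.diagonal_one]
  calc C = _ := hH.spectral_theorem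
    _ = 1 := by
      rw [hdiag, Unitary.conjStarAlgAut_apply, Matrix.mul_one]
      exact (Matrix.mem_unitaryGroup_iff).mp (hH.eigenvectorUnitary).2




noncomputable def shiftU (n : ℕ) : Matrix (Fin n) (Fin n) ℝ :=
  Matrix.of fun i j => (if i = j then (1:ℝ) else 0) + (if (i:ℕ)+1 = (j:ℕ) then (-1:ℝ) else 0)

lemma shiftU_mul {n : ℕ} (P : Matrix (Fin n) (Fin n) ℝ) (i j : Fin n) :
    (shiftU n * P) i j = P i j - (if h : (i:ℕ)+1 < n then P ⟨(i:ℕ)+1, h⟩ j else 0) := by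
  rw [Matrix.mul_apply]
  simp only [shiftU, Matrix.of_apply, add_mul, ite_mul, one_mul, zero_mul, neg_one_mul]
  rw [Finset.sum_add_distrib]
  congr 1
  · simp
  · by_cases h : (i:ℕ)+1 < n
    · rw [dif_pos h]
      have : ∀ k : Fin n, ((i:ℕ)+1 = (k:ℕ)) = ((⟨(i:ℕ)+1, h⟩ : Fin n) = k) := fun k =>
        propext ⟨fun hk => Fin.ext hk, fun hk => by rw [← hk]⟩
      simp only [this]
      rw [Finset.sum_ite_eq Finset.univ (⟨(i:ℕ)+1, h⟩ : Fin n) (fun k => -P k j)]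
      simp
    · rw [dif_neg h, neg_zero]
      refine Finset.sum_eq_zero fun k _ => ?_
      have := k.isLt
      rw [if_neg (by omega)]

lemma mul_shiftUT {n : ℕ} (P : Matrix (Fin n) (Fin n) ℝ) (i j : Fin n) :
    (P * (shiftU n)ᴴ) i j = P i j - (if h : (j:ℕ)+1 < n then P i ⟨(j:ℕ)+1, h⟩ else 0) := by
  rw [Matrix.mul_apply]
  simp only [Matrix.conjTranspose_apply, shiftU, Matrix.of_apply, star_trivial, mul_add,
    mul_ite, mul_one, mul_zero, mul_neg]
  rw [Finset.sum_add_distrib]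
  congr 1
  · simp
  · by_cases h : (j:ℕ)+1 < n
    · rw [dif_pos h]
      have : ∀ k : Fin n, ((j:ℕ)+1 = (k:ℕ)) = (k = (⟨(j:ℕ)+1, h⟩ : Fin n)) := fun k =>
        propext ⟨fun hk => (Fin.ext hk).symm, fun hk => by rw [hk]⟩
      simp only [this]
      rw [Finset.sum_ite_eq' Finset.univ (⟨(j:ℕ)+1, h⟩ : Fin n) (fun k => -P i k)]
      simp
    · rw [dif_neg h, neg_zero]
      refine Finset.sum_eq_zero fun k _ => ?_
      have := k.isLt
      rw [if_neg (by omega)]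

lemma shiftU_det {n : ℕ} : (shiftU n).det = 1 := by
  rw [Matrix.det_of_upperTriangular]
  · rw [Finset.prod_eq_one]
    intro i _
    simp [shiftU]
  · intro i j hij
    simp only [id_eq] at hij
    have h1 : (j:ℕ) < (i:ℕ) := hij
    simp only [shiftU, Matrix.of_apply]
    rw [if_neg (by exact fun h => by simp [h] at h1), if_neg (by omega)]
    ring




noncomputable def dvec (n : ℕ) (α : ℝ) : Fin n → ℝ :=
  fun i => if (i:ℕ)+1 < n then α^((i:ℕ)+1) - α^((i:ℕ)+2) else α^((i:ℕ)+1)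

lemma stepA (n : ℕ) (α : ℝ)
    (K : Matrix (Fin n) (Fin n) ℝ)
    (hK : ∀ i j : Fin n, K i j = α ^ (max (i : ℕ) (j : ℕ) + 1)) : shiftU n * K * (shiftU n)ᴴ = Matrix.diagonal (dvec n α) := by
  rw [Matrix.mul_assoc]
  ext i j
  rw [shiftU_mul]
  simp only [mul_shiftUT]
  rcases Nat.lt_trichotomy (i:ℕ) (j:ℕ) with h | h | h
  · have hi : (i:ℕ)+1 < n := by have := j.isLt; omega
    rw [Matrix.diagonal_apply_ne _ (fun he => by rw [he] at h; omega)]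
    by_cases hj : (j:ℕ)+1 < n
    · simp only [dif_pos hi, dif_pos hj, hK]
      rw [show max (i:ℕ) (j:ℕ) = j by omega, show max ((i:ℕ)+1) (j:ℕ) = j by omega,
        show max (i:ℕ) ((j:ℕ)+1) = (j:ℕ)+1 by omega,
        show max ((i:ℕ)+1) ((j:ℕ)+1) = (j:ℕ)+1 by omega]
      ring
    · simp only [dif_pos hi, dif_neg hj, hK]
      rw [show max (i:ℕ) (j:ℕ) = j by omega, show max ((i:ℕ)+1) (j:ℕ) = j by omega]
      ring
  · have hij : i = j := Fin.ext h
    subst hij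
    rw [Matrix.diagonal_apply_eq]
    by_cases hi : (i:ℕ)+1 < n
    · simp only [dif_pos hi, hK, dvec, if_pos hi]
      rw [show max (i:ℕ) (i:ℕ) = i by omega, show max ((i:ℕ)+1) (i:ℕ) = (i:ℕ)+1 by omega,
        show max (i:ℕ) ((i:ℕ)+1) = (i:ℕ)+1 by omega,
        show max ((i:ℕ)+1) ((i:ℕ)+1) = (i:ℕ)+1 by omega]
      ring
    · simp only [dif_neg hi, hK, dvec, if_neg hi, sub_zero]
      rw [show max (i:ℕ) (i:ℕ) = i by omega]
  · have hj : (j:ℕ)+1 < n := by have := i.isLt; omega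
    rw [Matrix.diagonal_apply_ne _ (fun he => by rw [he] at h; omega)]
    by_cases hi : (i:ℕ)+1 < n
    · simp only [dif_pos hi, dif_pos hj, hK]
      rw [show max (i:ℕ) (j:ℕ) = i by omega, show max ((i:ℕ)+1) (j:ℕ) = (i:ℕ)+1 by omega,
        show max (i:ℕ) ((j:ℕ)+1) = i by omega,
        show max ((i:ℕ)+1) ((j:ℕ)+1) = (i:ℕ)+1 by omega]
      ring
    · simp only [dif_neg hi, dif_pos hj, hK]
      rw [show max (i:ℕ) (j:ℕ) = i by omega, show max (i:ℕ) ((j:ℕ)+1) = i by omega]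
      ring



noncomputable def evec (n : ℕ) (α : ℝ) : Fin n → ℝ := fun i => Real.sqrt (dvec n α i)

/-- Uniqueness of the maximum-determinant completion: if a symmetric positive
semidefinite matrix `M` agrees with the first-order stable spline kernel `K`
(entries `K_{ij} = α^{max(i,j)}`, 1-indexed) on the 1-band and `det(M) = det(K)`,
then `M = K`. -/
theorem stmt_6 (n : ℕ) (hn : 1 ≤ n) (α : ℝ) (hα0 : 0 < α) (hα1 : α < 1)
    (K : Matrix (Fin n) (Fin n) ℝ)
    (hK : ∀ i j : Fin n, K i j = α ^ (max (i : ℕ) (j : ℕ) + 1))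
    (M : Matrix (Fin n) (Fin n) ℝ) (hM : M.PosSemidef)
    (hdiag : ∀ i : Fin n, M i i = α ^ ((i : ℕ) + 1))
    (hoff : ∀ i j : Fin n, (i : ℕ) + 1 = (j : ℕ) →
      M i j = α ^ ((j : ℕ) + 1) ∧ M j i = α ^ ((j : ℕ) + 1))
    (hdet : M.det = K.det) :
    M = K := by
  classical
  have hA : shiftU n * K * (shiftU n)ᴴ = Matrix.diagonal (dvec n α) := stepA n α K hK
  have hB : ∀ i : Fin n, (shiftU n * M * (shiftU n)ᴴ) i i = dvec n α i := by
    intro i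
    rw [Matrix.mul_assoc, shiftU_mul]
    simp only [mul_shiftUT]
    by_cases hi : (i:ℕ)+1 < n
    · obtain ⟨h1, h2⟩ := hoff i ⟨(i:ℕ)+1, hi⟩ rfl
      simp only [dif_pos hi]
      rw [hdiag i, hdiag ⟨(i:ℕ)+1, hi⟩, h1, h2]
      simp only [dvec, if_pos hi]
      ring
    · simp only [dif_neg hi, sub_zero]
      rw [hdiag i]
      simp only [dvec, if_neg hi]
  have hdetU : (shiftU n).det = 1 := shiftU_det
  have hdetUH : ((shiftU n)ᴴ).det = 1 := by
    rw [Matrix.det_conjTranspose, shiftU_det, star_one]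
  have hdetK : K.det = ∏ i, dvec n α i := by
    have h := congrArg Matrix.det hA
    rw [Matrix.det_mul, Matrix.det_mul, hdetU, hdetUH, one_mul, mul_one,
      Matrix.det_diagonal] at h
    exact h
  have hdetN : (shiftU n * M * (shiftU n)ᴴ).det = ∏ i, dvec n α i := by
    rw [Matrix.det_mul, Matrix.det_mul, hdetU, hdetUH, one_mul, mul_one, hdet, hdetK]
  have hNpsd : (shiftU n * M * (shiftU n)ᴴ).PosSemidef := hM.mul_mul_conjTranspose_same _
  have hdpos : ∀ i : Fin n, 0 < dvec n α i := by
    intro i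
    simp only [dvec]
    split
    · have h1 := pow_pos hα0 ((i:ℕ)+1)
      have h2 : α^((i:ℕ)+2) = α^((i:ℕ)+1) * α := by ring
      nlinarith
    · exact pow_pos hα0 _
  have he : ∀ i, 0 < evec n α i := fun i => Real.sqrt_pos.mpr (hdpos i)
  have hee : ∀ i, evec n α i * evec n α i = dvec n α i :=
    fun i => Real.mul_self_sqrt (hdpos i).le
  have hEH : (Matrix.diagonal (fun i => (evec n α i)⁻¹))ᴴ
      = Matrix.diagonal (fun i => (evec n α i)⁻¹) := by
    rw [Matrix.diagonal_conjTranspose,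
      show star (fun i => (evec n α i)⁻¹) = (fun i => (evec n α i)⁻¹) from
        funext fun i => star_trivial _]
  have hCpsd : (Matrix.diagonal (fun i => (evec n α i)⁻¹) * (shiftU n * M * (shiftU n)ᴴ)
      * (Matrix.diagonal (fun i => (evec n α i)⁻¹))ᴴ).PosSemidef :=
    hNpsd.mul_mul_conjTranspose_same _
  rw [hEH] at hCpsd
  have hCentry : ∀ i j, (Matrix.diagonal (fun i => (evec n α i)⁻¹)
      * (shiftU n * M * (shiftU n)ᴴ) * Matrix.diagonal (fun i => (evec n α i)⁻¹)) i j
      = (evec n α i)⁻¹ * ((shiftU n * M * (shiftU n)ᴴ) i j * (evec n α j)⁻¹) := by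
    intro i j
    rw [Matrix.mul_diagonal, Matrix.diagonal_mul, mul_assoc]
  have htrC : (Matrix.diagonal (fun i => (evec n α i)⁻¹) * (shiftU n * M * (shiftU n)ᴴ)
      * Matrix.diagonal (fun i => (evec n α i)⁻¹)).trace = n := by
    rw [Matrix.trace]
    rw [Finset.sum_congr rfl (fun i _ => show _ = (1:ℝ) by
      rw [Matrix.diag_apply, hCentry, hB i, ← hee i,
        mul_assoc (evec n α i) (evec n α i) (evec n α i)⁻¹,
        mul_inv_cancel₀ (he i).ne', mul_one, inv_mul_cancel₀ (he i).ne'])]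
    simp
  have hdetC : (Matrix.diagonal (fun i => (evec n α i)⁻¹) * (shiftU n * M * (shiftU n)ᴴ)
      * Matrix.diagonal (fun i => (evec n α i)⁻¹)).det = 1 := by
    rw [Matrix.det_mul, Matrix.det_mul, hdetN, Matrix.det_diagonal,
      ← Finset.prod_mul_distrib, ← Finset.prod_mul_distrib]
    refine Finset.prod_eq_one fun i _ => ?_
    rw [← hee i]
    field_simp [(he i).ne']
  have hC1 := psd_eq_one_of_trace_det _ hCpsd htrC hdetC
  have hFE : Matrix.diagonal (evec n α) * Matrix.diagonal (fun i => (evec n α i)⁻¹) = 1 := by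
    rw [Matrix.diagonal_mul_diagonal,
      show (fun i => evec n α i * (evec n α i)⁻¹) = fun _ : Fin n => (1:ℝ) from
        funext fun i => mul_inv_cancel₀ (he i).ne', Matrix.diagonal_one]
  have hEF : Matrix.diagonal (fun i => (evec n α i)⁻¹) * Matrix.diagonal (evec n α) = 1 := by
    rw [Matrix.diagonal_mul_diagonal,
      show (fun i => (evec n α i)⁻¹ * evec n α i) = fun _ : Fin n => (1:ℝ) from
        funext fun i => inv_mul_cancel₀ (he i).ne', Matrix.diagonal_one]
  have hNdiag : shiftU n * M * (shiftU n)ᴴ = Matrix.diagonal (dvec n α) := by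
    have key : Matrix.diagonal (evec n α) * (Matrix.diagonal (fun i => (evec n α i)⁻¹)
        * (shiftU n * M * (shiftU n)ᴴ) * Matrix.diagonal (fun i => (evec n α i)⁻¹))
        * Matrix.diagonal (evec n α)
        = Matrix.diagonal (evec n α) * Matrix.diagonal (evec n α) := by
      rw [hC1, Matrix.mul_one]
    calc shiftU n * M * (shiftU n)ᴴ
        = 1 * (shiftU n * M * (shiftU n)ᴴ) * 1 := by rw [Matrix.one_mul, Matrix.mul_one]
      _ = (Matrix.diagonal (evec n α) * Matrix.diagonal (fun i => (evec n α i)⁻¹))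
            * (shiftU n * M * (shiftU n)ᴴ)
            * (Matrix.diagonal (fun i => (evec n α i)⁻¹) * Matrix.diagonal (evec n α)) := by
          rw [hFE, hEF]
      _ = Matrix.diagonal (evec n α) * (Matrix.diagonal (fun i => (evec n α i)⁻¹)
            * (shiftU n * M * (shiftU n)ᴴ) * Matrix.diagonal (fun i => (evec n α i)⁻¹))
            * Matrix.diagonal (evec n α) := by
          simp only [Matrix.mul_assoc]
      _ = Matrix.diagonal (evec n α) * Matrix.diagonal (evec n α) := key
      _ = Matrix.diagonal (dvec n α) := by
          rw [Matrix.diagonal_mul_diagonal,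
            show (fun i => evec n α i * evec n α i) = dvec n α from funext fun i => hee i]
  have heq : shiftU n * M * (shiftU n)ᴴ = shiftU n * K * (shiftU n)ᴴ := by rw [hNdiag, hA]
  have hUunit : IsUnit (shiftU n) :=
    (Matrix.isUnit_iff_isUnit_det _).mpr (by rw [hdetU]; exact isUnit_one)
  have hUHunit : IsUnit ((shiftU n)ᴴ) :=
    (Matrix.isUnit_iff_isUnit_det _).mpr (by rw [hdetUH]; exact isUnit_one)
  have h1 : shiftU n * (M * (shiftU n)ᴴ) = shiftU n * (K * (shiftU n)ᴴ) := by
    rw [← Matrix.mul_assoc, ← Matrix.mul_assoc]; exact heq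
  exact hUHunit.mul_right_cancel (hUunit.mul_left_cancel h1)
end

section
/- Let 0 < α < 1 and n ≥ 2, and let e₁, e₂ denote the first two standard basis vectors of ℝⁿ. Then K⁻¹ e₁ = (1/(α − α²)) (e₁ − e₂); that is, the first column of K⁻¹ has first entry 1/(α − α²), second entry −1/(α − α²), and all remaining entries equal to zero. -/
private lemma tc_det_ne_zero (α : ℝ) (hα0 : 0 < α) (hα1 : α < 1) :
    ∀ n : ℕ, (Matrix.of fun i j : Fin (n + 1) => α ^ (max (i : ℕ) (j : ℕ) + 1)).det ≠ 0 := by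
  have hαne : α ≠ 0 := ne_of_gt hα0
  have hsub : α - α ^ 2 ≠ 0 := by nlinarith
  intro n
  induction n with
  | zero =>
    rw [Matrix.det_fin_one]
    simp [hαne]
  | succ m ih =>
    set A : Matrix (Fin (m + 2)) (Fin (m + 2)) ℝ :=
      Matrix.of fun i j : Fin (m + 2) => α ^ (max (i : ℕ) (j : ℕ) + 1) with hA
    have h01 : (0 : Fin (m + 2)) ≠ 1 := by simp
    have hdet : (A.updateRow 0 (A 0 + (-1 : ℝ) • A 1)).det = A.det :=
      Matrix.det_updateRow_add_smul_self A h01 (-1)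
    set A' := A.updateRow 0 (A 0 + (-1 : ℝ) • A 1) with hA'
    -- row zero of A' is (α - α², 0, ..., 0)
    have hrow : ∀ j : Fin (m + 2), A' 0 j = if j = 0 then α - α ^ 2 else 0 := by
      intro j
      have : A' 0 j = A 0 j - A 1 j := by
        simp [hA', Matrix.updateRow_self]
        ring
      rw [this]
      by_cases hj : j = 0
      · subst hj
        simp only [hA, Matrix.of_apply, if_pos rfl, Fin.val_zero, Fin.val_one]
        norm_num
      · have hj1 : 1 ≤ (j : ℕ) := Nat.one_le_iff_ne_zero.mpr (by
          exact fun h => hj (Fin.ext (by rw [h, Fin.val_zero])))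
        simp only [hA, Matrix.of_apply, if_neg hj, Fin.val_zero, Fin.val_one]
        rw [Nat.max_eq_right (le_trans (by norm_num) hj1), Nat.max_eq_right hj1, sub_self]
    have hexp : A'.det = (α - α ^ 2) * (A'.submatrix Fin.succ (Fin.succAbove 0)).det := by
      rw [Matrix.det_succ_row_zero]
      rw [Finset.sum_eq_single 0]
      · rw [hrow 0]; simp
      · intro j _ hj
        rw [hrow j]; simp [hj]
      · intro h; simp at h
    -- the minor equals α • (smaller kernel)
    have hminor : A'.submatrix Fin.succ (Fin.succAbove 0) =
        α • (Matrix.of fun i j : Fin (m + 1) => α ^ (max (i : ℕ) (j : ℕ) + 1)) := by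
      ext i j
      have hsucc : (Fin.succ i : Fin (m + 2)) ≠ 0 := Fin.succ_ne_zero i
      simp [hA', hA, Matrix.submatrix_apply, Fin.succAbove_zero,
        Matrix.updateRow_ne hsucc, Fin.val_succ]
      ring
    rw [← hdet, hexp, hminor, Matrix.det_smul]
    simp only [Fintype.card_fin]
    exact mul_ne_zero hsub (mul_ne_zero (pow_ne_zero _ hαne) ih)

/-- For the first-order stable spline kernel `K` (entries `K_{ij} = α^{max(i,j)}`,
1-indexed) with `n ≥ 2`, the first column of `K⁻¹` is
`(1/(α − α²)) (e₁ − e₂)`. -/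
theorem stmt_8 (n : ℕ) (hn : 2 ≤ n) (α : ℝ) (hα0 : 0 < α) (hα1 : α < 1)
    (K : Matrix (Fin n) (Fin n) ℝ)
    (hK : ∀ i j : Fin n, K i j = α ^ (max (i : ℕ) (j : ℕ) + 1)) :
    K⁻¹.mulVec (Pi.single (⟨0, by omega⟩ : Fin n) (1 : ℝ)) =
      (1 / (α - α ^ 2)) •
        (Pi.single (⟨0, by omega⟩ : Fin n) (1 : ℝ) -
         Pi.single (⟨1, by omega⟩ : Fin n) (1 : ℝ)) := by
  have hsub : α - α ^ 2 ≠ 0 := by nlinarith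
  -- K has nonzero determinant
  obtain ⟨m, rfl⟩ : ∃ m, n = m + 1 := ⟨n - 1, by omega⟩
  have hKeq : K = Matrix.of fun i j : Fin (m + 1) => α ^ (max (i : ℕ) (j : ℕ) + 1) := by
    ext i j; exact hK i j
  have hdet : K.det ≠ 0 := by rw [hKeq]; exact tc_det_ne_zero α hα0 hα1 m
  set e₀ : Fin (m + 1) → ℝ := Pi.single (⟨0, by omega⟩ : Fin (m + 1)) (1 : ℝ) with he₀
  set e₁ : Fin (m + 1) → ℝ := Pi.single (⟨1, by omega⟩ : Fin (m + 1)) (1 : ℝ) with he₁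
  set v : Fin (m + 1) → ℝ := (1 / (α - α ^ 2)) • (e₀ - e₁) with hv
  -- K * v = e₀
  have hKv : K.mulVec v = e₀ := by
    have h0 : K.mulVec e₀ = fun i => K i ⟨0, by omega⟩ := by
      rw [he₀, Matrix.mulVec_single]; simp; rfl
    have h1 : K.mulVec e₁ = fun i => K i ⟨1, by omega⟩ := by
      rw [he₁, Matrix.mulVec_single]; simp; rfl
    rw [hv, Matrix.mulVec_smul, Matrix.mulVec_sub, h0, h1]
    funext i
    simp only [Pi.smul_apply, Pi.sub_apply, smul_eq_mul]
    by_cases hi : i = ⟨0, by omega⟩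
    · subst hi
      rw [hK, hK]
      simp only [he₀, Pi.single_apply, if_pos rfl]
      norm_num
      field_simp
      exact div_self (sub_ne_zero.mpr (ne_of_gt hα1))
    · have hi1 : 1 ≤ (i : ℕ) := Nat.one_le_iff_ne_zero.mpr (by
        exact fun h => hi (Fin.ext h))
      rw [hK, hK]
      have h0 : max (i : ℕ) ((⟨0, by omega⟩ : Fin (m+1)) : ℕ) = (i : ℕ) :=
        Nat.max_eq_left (by simp)
      have h1 : max (i : ℕ) ((⟨1, by omega⟩ : Fin (m+1)) : ℕ) = (i : ℕ) :=
        Nat.max_eq_left (by simpa using hi1)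
      rw [h0, h1, sub_self, mul_zero]
      have hi0 : (i : ℕ) ≠ 0 := by omega
      simp [he₀, Pi.single_apply, Fin.ext_iff, hi0]
  calc K⁻¹.mulVec e₀ = K⁻¹.mulVec (K.mulVec v) := by rw [hKv]
    _ = (K⁻¹ * K).mulVec v := Matrix.mulVec_mulVec v K⁻¹ K
    _ = v := by rw [Matrix.nonsing_inv_mul K (isUnit_iff_ne_zero.mpr hdet), Matrix.one_mulVec]
end

section
/- Let 0 < α < 1 and, for x ∈ ℝ, let S(x) be the 3×3 real symmetric matrix with rows (α, α², x), (α², α², α³), (x, α³, α³). Then for every x ∈ ℝ, det S(x) ≤ det S(α³); that is, the determinant of the completion is maximized by the central completion x° = α³, which matches the (1,3) entry of the first-order stable spline kernel. -/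
/-- The determinant of the 3×3 one-step completion
`S(x) = [[α, α², x], [α², α², α³], [x, α³, α³]]` is maximized at the central
completion `x° = α³`, which is the (1,3) entry of the first-order stable
spline kernel. -/
theorem stmt_9 (α : ℝ) (hα0 : 0 < α) (hα1 : α < 1)
    (S : ℝ → Matrix (Fin 3) (Fin 3) ℝ)
    (hS : ∀ x : ℝ, S x = !![α, α ^ 2, x; α ^ 2, α ^ 2, α ^ 3; x, α ^ 3, α ^ 3]) :
    ∀ x : ℝ, (S x).det ≤ (S (α ^ 3)).det := by
  intro x
  rw [hS x, hS (α ^ 3)]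
  norm_num [Matrix.det_fin_three, Matrix.cons_val_two]
  nlinarith [sq_nonneg (x - α ^ 3), pow_pos hα0 2, sq_nonneg α]
end

section
/- Let 0 < α < 1, λ > 0, and n ≥ 1, and let M be the n×n real matrix with entries M_{ij} = λ α^{max(i,j)} for 1 ≤ i, j ≤ n. Then M is symmetric positive definite. -/
open Matrix in
private lemma tele_Ico (f : ℕ → ℝ) (m : ℕ) :
    ∀ N, m ≤ N → ∑ k ∈ Finset.Ico m N, (f k - f (k + 1)) = f m - f N := by
  intro N
  induction N with
  | zero => intro h; interval_cases m; simp
  | succ N ih =>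
    intro h
    rcases Nat.lt_or_ge m (N + 1) with h' | h'
    · have hmN : m ≤ N := Nat.lt_succ_iff.mp h'
      rw [Finset.sum_Ico_succ_top hmN, ih hmN]; ring
    · have : m = N + 1 := le_antisymm h h'
      subst this; simp

open Matrix in
/-- The first-order stable spline kernel with entries `M_{ij} = λ α^{max(i,j)}`
(1-indexed), for `λ > 0` and `0 < α < 1`, is symmetric positive definite. -/
theorem stmt_10 (n : ℕ) (hn : 1 ≤ n) (α lam : ℝ) (hα0 : 0 < α) (hα1 : α < 1)
    (hlam : 0 < lam)
    (M : Matrix (Fin n) (Fin n) ℝ)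
    (hM : ∀ i j : Fin n, M i j = lam * α ^ (max (i : ℕ) (j : ℕ) + 1)) :
    M.PosDef := by
  classical
  -- the Cholesky-like factor
  set c : Fin (n + 1) → ℝ := fun k =>
    if (k : ℕ) < n then Real.sqrt (lam * (α ^ ((k : ℕ) + 1) - α ^ ((k : ℕ) + 2)))
    else Real.sqrt (lam * α ^ (n + 1)) with hc
  have hsub_pos : ∀ k : ℕ, 0 < α ^ (k + 1) - α ^ (k + 2) := by
    intro k
    have h1 : α ^ (k + 2) = α ^ (k + 1) * α := by ring
    have := mul_pos (pow_pos hα0 (k + 1)) (sub_pos.2 hα1)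
    nlinarith
  have hcpos : ∀ k : Fin (n + 1), 0 < c k := by
    intro k
    simp only [hc]
    split_ifs
    · exact Real.sqrt_pos.2 (mul_pos hlam (hsub_pos _))
    · exact Real.sqrt_pos.2 (mul_pos hlam (pow_pos hα0 _))
  set B : Matrix (Fin (n + 1)) (Fin n) ℝ := fun k i =>
    if (i : ℕ) ≤ (k : ℕ) then c k else 0 with hB
  -- squared values of c
  have hcsq : ∀ k : Fin (n + 1),
      c k * c k = (if (k : ℕ) < n then lam * α ^ ((k : ℕ) + 1) - lam * α ^ ((k : ℕ) + 2)
        else lam * α ^ (n + 1)) := by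
    intro k
    simp only [hc]
    split_ifs with h
    · rw [Real.mul_self_sqrt (le_of_lt (mul_pos hlam (hsub_pos _)))]
      ring
    · rw [Real.mul_self_sqrt (le_of_lt (mul_pos hlam (pow_pos hα0 _)))]
  -- factorization M = Bᴴ * B
  have hMB : M = B.conjTranspose * B := by
    ext i j
    rw [hM, Matrix.mul_apply]
    simp only [Matrix.conjTranspose_apply, star_trivial]
    have hmn : max (i : ℕ) (j : ℕ) < n := max_lt i.isLt j.isLt
    have hentry : ∀ k : Fin (n + 1),
        B k i * B k j = if max (i : ℕ) (j : ℕ) ≤ (k : ℕ) then c k * c k else 0 := by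
      intro k
      simp only [hB]
      by_cases h1 : (i : ℕ) ≤ (k : ℕ) <;> by_cases h2 : (j : ℕ) ≤ (k : ℕ)
      · rw [if_pos h1, if_pos h2, if_pos (max_le h1 h2)]
      · rw [if_pos h1, if_neg h2, mul_zero,
          if_neg (fun h => h2 (le_trans (le_max_right _ _) h))]
      · rw [if_neg h1, if_pos h2, zero_mul,
          if_neg (fun h => h1 (le_trans (le_max_left _ _) h))]
      · rw [if_neg h1, if_neg h2, zero_mul,
          if_neg (fun h => h1 (le_trans (le_max_left _ _) h))]
    simp_rw [hentry, hcsq]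
    rw [Fin.sum_univ_eq_sum_range (fun k => if max (i : ℕ) (j : ℕ) ≤ k then
      (if k < n then lam * α ^ (k + 1) - lam * α ^ (k + 2) else lam * α ^ (n + 1))
      else 0) (n + 1)]
    rw [Finset.range_eq_Ico, ← Finset.sum_Ico_consecutive _ (Nat.zero_le (max (i:ℕ) (j:ℕ)))
      (by omega : max (i : ℕ) (j : ℕ) ≤ n + 1)]
    have h1 : (∑ k ∈ Finset.Ico 0 (max (i:ℕ) (j:ℕ)), if max (i:ℕ) (j:ℕ) ≤ k then
        (if k < n then lam * α ^ (k + 1) - lam * α ^ (k + 2) else lam * α ^ (n + 1))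
        else 0) = 0 := by
      apply Finset.sum_eq_zero
      intro k hk
      rw [Finset.mem_Ico] at hk
      rw [if_neg (by omega)]
    have h2 : (∑ k ∈ Finset.Ico (max (i:ℕ) (j:ℕ)) (n + 1), if max (i:ℕ) (j:ℕ) ≤ k then
        (if k < n then lam * α ^ (k + 1) - lam * α ^ (k + 2) else lam * α ^ (n + 1))
        else 0)
        = ∑ k ∈ Finset.Ico (max (i:ℕ) (j:ℕ)) (n + 1),
          (if k < n then lam * α ^ (k + 1) - lam * α ^ (k + 2) else lam * α ^ (n + 1)) := by
      apply Finset.sum_congr rfl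
      intro k hk
      rw [Finset.mem_Ico] at hk
      rw [if_pos hk.1]
    rw [h1, h2, zero_add, Finset.sum_Ico_succ_top (by omega : max (i:ℕ) (j:ℕ) ≤ n)]
    have h3 : (∑ k ∈ Finset.Ico (max (i:ℕ) (j:ℕ)) n,
          (if k < n then lam * α ^ (k + 1) - lam * α ^ (k + 2) else lam * α ^ (n + 1)))
        = ∑ k ∈ Finset.Ico (max (i:ℕ) (j:ℕ)) n, ((fun k => lam * α ^ (k + 1)) k
            - (fun k => lam * α ^ (k + 1)) (k + 1)) := by
      apply Finset.sum_congr rfl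
      intro k hk
      rw [Finset.mem_Ico] at hk
      simp only [if_pos hk.2]
    rw [h3, tele_Ico _ _ _ (by omega : max (i:ℕ) (j:ℕ) ≤ n), if_neg (lt_irrefl n)]
    ring
  -- injectivity of B
  have hinj : ∀ x : Fin n → ℝ, B *ᵥ x = 0 → x = 0 := by
    intro x hx
    have hS : ∀ k : Fin (n + 1),
        ∑ i ∈ Finset.univ.filter (fun i : Fin n => (i : ℕ) ≤ (k : ℕ)), x i = 0 := by
      intro k
      have hk := congrFun hx k
      simp only [Matrix.mulVec, dotProduct, hB, Pi.zero_apply] at hk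
      have : (∑ i : Fin n, (if (i : ℕ) ≤ (k : ℕ) then c k else 0) * x i)
          = c k * ∑ i ∈ Finset.univ.filter (fun i : Fin n => (i : ℕ) ≤ (k : ℕ)), x i := by
        rw [Finset.mul_sum, Finset.sum_filter]
        apply Finset.sum_congr rfl
        intro i _
        split_ifs <;> ring
      rw [this] at hk
      exact (mul_eq_zero.mp hk).resolve_left (ne_of_gt (hcpos k))
    have key : ∀ m : ℕ, m ≤ n → ∀ i : Fin n, (i : ℕ) < m → x i = 0 := by
      intro m
      induction m with
      | zero => intro _ i hi; omega
      | succ m ih =>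
        intro hm i hi
        rcases Nat.lt_or_ge (i : ℕ) m with h' | h'
        · exact ih (by omega) i h'
        · have him : (i : ℕ) = m := by omega
          have hk := hS ⟨m, by omega⟩
          rw [Finset.sum_eq_single_of_mem i (by simp [him])] at hk
          · exact hk
          · intro j hj hne
            simp only [Finset.mem_filter, Finset.mem_univ, true_and] at hj
            apply ih (by omega) j
            have : (j : ℕ) ≠ (i : ℕ) := fun h => hne (Fin.ext h)
            omega
    funext i
    exact key n le_rfl i i.isLt
  rw [Matrix.posDef_iff_dotProduct_mulVec]
  constructor
  · rw [hMB]; exact Matrix.isHermitian_conjTranspose_mul_self B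
  · intro x hx
    rw [hMB, ← Matrix.mulVec_mulVec, dotProduct_mulVec,
      Matrix.vecMul_conjTranspose, star_star]
    have hy : B *ᵥ x ≠ 0 := fun h => hx (hinj x h)
    obtain ⟨k0, hk0⟩ : ∃ k, (B *ᵥ x) k ≠ 0 := by
      by_contra h
      push_neg at h
      exact hy (funext h)
    have : star (B *ᵥ x) ⬝ᵥ (B *ᵥ x) = ∑ k, (B *ᵥ x) k * (B *ᵥ x) k := by
      simp [dotProduct]
    rw [this]
    apply Finset.sum_pos'
    · intro k _; exact mul_self_nonneg _
    · exact ⟨k0, Finset.mem_univ _, mul_self_pos.2 hk0⟩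
end

section
/- Let n ≥ 1 and 0 ≤ m ≤ n−1 be integers, and let Σ* be an n×n real symmetric positive definite matrix whose inverse is m-banded, i.e. (Σ*⁻¹)_{ij} = 0 whenever |i − j| > m. Then for every n×n real symmetric positive semidefinite matrix M agreeing with Σ* on the band, i.e. M_{ij} = Σ*_{ij} for all i, j with |i − j| ≤ m, one has det(M) ≤ det(Σ*). In other words, a positive definite band extension with m-banded inverse maximizes the determinant over all positive semidefinite extensions of the same m-band data. -/
open Matrix
open scoped MatrixOrder

/-- Trace of a real Hermitian matrix is the sum of its eigenvalues. -/
lemma trace_eq_sum_eigs {N : Type*} [Fintype N] [DecidableEq N]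
    {A : Matrix N N ℝ} (hA : A.IsHermitian) :
    A.trace = ∑ i, hA.eigenvalues i := by
  conv_lhs => rw [hA.spectral_theorem, Unitary.conjStarAlgAut_apply]
  rw [Matrix.trace_mul_cycle]
  have hu : (star (hA.eigenvectorUnitary : Matrix N N ℝ)) *
      (hA.eigenvectorUnitary : Matrix N N ℝ) = 1 :=
    (Matrix.mem_unitaryGroup_iff').mp hA.eigenvectorUnitary.2
  rw [hu, one_mul, Matrix.trace_diagonal]
  simp

/-- AM-GM: nonnegative reals with sum equal to the cardinality have product at most 1. -/
lemma prod_le_one_of_sum_eq_card {N : Type*} [Fintype N] (hN : 0 < Fintype.card N)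
    (z : N → ℝ) (hz : ∀ i, 0 ≤ z i) (hsum : ∑ i, z i = Fintype.card N) :
    ∏ i, z i ≤ 1 := by
  set c : ℝ := (Fintype.card N : ℝ) with hc
  have hc0 : 0 < c := Nat.cast_pos.mpr hN
  have h1 : ∏ i, z i ^ (c⁻¹ : ℝ) ≤ ∑ i, c⁻¹ * z i := by
    apply Real.geom_mean_le_arith_mean_weighted
    · intro i _; positivity
    · rw [Finset.sum_const, Finset.card_univ, nsmul_eq_mul]
      field_simp
      exact hc.symm
    · intro i _; exact hz i
  have h2 : ∑ i, c⁻¹ * z i = 1 := by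
    rw [← Finset.mul_sum, hsum]
    exact inv_mul_cancel₀ hc0.ne'
  have h3 : (∏ i, z i) ^ (c⁻¹ : ℝ) ≤ 1 := by
    rw [← Real.finset_prod_rpow _ _ (fun i _ => hz i)]
    rw [h2] at h1; exact h1
  have hp : 0 ≤ ∏ i, z i := Finset.prod_nonneg fun i _ => hz i
  calc ∏ i, z i = ((∏ i, z i) ^ (c⁻¹ : ℝ)) ^ (c : ℝ) := by
        rw [← Real.rpow_mul hp, inv_mul_cancel₀ hc0.ne', Real.rpow_one]
    _ ≤ 1 ^ (c : ℝ) := by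
        apply Real.rpow_le_rpow (Real.rpow_nonneg hp _) h3 hc0.le
    _ = 1 := Real.one_rpow _

/-- A positive definite band extension whose inverse is `m`-banded maximizes the
determinant over all positive semidefinite extensions of the same `m`-band
data. -/
theorem stmt_11 (n m : ℕ) (hn : 1 ≤ n) (hm : m ≤ n - 1)
    (Sig : Matrix (Fin n) (Fin n) ℝ) (hSig : Sig.PosDef)
    (hbandinv : ∀ i j : Fin n, ((i : ℕ) + m < (j : ℕ) ∨ (j : ℕ) + m < (i : ℕ)) →
      Sig⁻¹ i j = 0)
    (M : Matrix (Fin n) (Fin n) ℝ) (hM : M.PosSemidef)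
    (hband : ∀ i j : Fin n, ((i : ℕ) ≤ (j : ℕ) + m ∧ (j : ℕ) ≤ (i : ℕ) + m) →
      M i j = Sig i j) :
    M.det ≤ Sig.det := by
  classical
  have hT : (Sig⁻¹).PosDef := hSig.inv
  have hinv : Sig⁻¹ * Sig = 1 := Matrix.nonsing_inv_mul _ hSig.det_pos.ne'.isUnit
  -- trace (Σ⁻¹ * M) = n
  have htr : (Sig⁻¹ * M).trace = n := by
    have heq : (Sig⁻¹ * M).trace = (Sig⁻¹ * Sig).trace := by
      simp only [Matrix.trace, Matrix.diag, Matrix.mul_apply]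
      refine Finset.sum_congr rfl fun i _ => Finset.sum_congr rfl fun j _ => ?_
      by_cases hb : ((j : ℕ) ≤ (i : ℕ) + m ∧ (i : ℕ) ≤ (j : ℕ) + m)
      · rw [hband j i hb]
      · have : (i : ℕ) + m < (j : ℕ) ∨ (j : ℕ) + m < (i : ℕ) := by omega
        rw [hbandinv i j this]; ring
    rw [heq, hinv, Matrix.trace_one]
    simp
  set R := CFC.sqrt (Sig⁻¹) with hRdef
  have hR : R.PosSemidef := (CFC.sqrt_nonneg _).posSemidef
  have hRR : R * R = Sig⁻¹ := CFC.sqrt_mul_sqrt_self _ hT.posSemidef.nonneg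
  have hRH : Rᴴ = R := hR.isHermitian
  set A := R * M * R with hAdef
  have hA : A.PosSemidef := by
    have := hM.mul_mul_conjTranspose_same R
    rwa [hRH] at this
  have htrA : A.trace = n := by
    rw [hAdef, Matrix.trace_mul_cycle, hRR, htr]
  have hdetA : A.det = (Sig.det)⁻¹ * M.det := by
    rw [hAdef, Matrix.det_mul, Matrix.det_mul]
    have : R.det * R.det = (Sig.det)⁻¹ := by
      rw [← Matrix.det_mul, hRR, Matrix.det_nonsing_inv, Ring.inverse_eq_inv']
    rw [mul_comm R.det M.det, mul_assoc, this, mul_comm]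
  -- AM-GM on eigenvalues of A
  have hAle : A.det ≤ 1 := by
    have hdet : A.det = ∏ i, hA.1.eigenvalues i := by
      have := hA.1.det_eq_prod_eigenvalues
      simpa using this
    have hsum : ∑ i, hA.1.eigenvalues i = Fintype.card (Fin n) := by
      rw [← trace_eq_sum_eigs hA.1, htrA, Fintype.card_fin]
    rw [hdet]
    exact prod_le_one_of_sum_eq_card (by simp; omega) _
      (fun i => hA.eigenvalues_nonneg i) hsum
  have hSd : 0 < Sig.det := hSig.det_pos
  have : (Sig.det)⁻¹ * M.det ≤ 1 := hdetA ▸ hAle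
  calc M.det = Sig.det * ((Sig.det)⁻¹ * M.det) := by field_simp
    _ ≤ Sig.det * 1 := by nlinarith
    _ = Sig.det := mul_one _
end

section
/- Let n ≥ 1 and 0 ≤ m ≤ n−1 be integers, and let σ_{ij} = σ_{ji} be given real numbers for all pairs (i,j) with 1 ≤ i, j ≤ n and |i − j| ≤ m. Then there exists an n×n real symmetric positive definite matrix M with M_{ij} = σ_{ij} for all |i − j| ≤ m if and only if for every i = 1, …, n − m the (m+1)×(m+1) matrix [σ_{kl}]_{k,l = i, …, i+m} is positive definite. -/
open Matrix

lemma sum_embed {K N : Type*} [Fintype K] [Fintype N] [DecidableEq N] (f : K → N)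
    (x : K → ℝ) (h : N → ℝ) :
    ∑ i, (∑ t, if i = f t then x t else 0) * h i = ∑ t, x t * h (f t) := by
  simp only [Finset.sum_mul, ite_mul, zero_mul]
  rw [Finset.sum_comm]
  simp

lemma embed_apply {K N : Type*} [Fintype K] [DecidableEq N] (f : K → N)
    (hf : Function.Injective f) (x : K → ℝ) (t : K) :
    (∑ s, if f t = f s then x s else 0) = x t := by
  classical
  rw [Finset.sum_congr rfl (fun s _ => by rw [if_congr (hf.eq_iff (a := t) (b := s)) rfl rfl])]
  simp

lemma posDef_submatrix_of_injective {N K : Type*} [Fintype N] [Fintype K] [DecidableEq N]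
    {M : Matrix N N ℝ} (hM : M.PosDef) (f : K → N) (hf : Function.Injective f) :
    (M.submatrix f f).PosDef := by
  classical
  refine Matrix.PosDef.of_dotProduct_mulVec_pos (hM.isHermitian.submatrix f) fun x hx => ?_
  set y : N → ℝ := fun i => ∑ t, if i = f t then x t else 0 with hy
  have hyg : ∀ t, y (f t) = x t := fun t => embed_apply f hf x t
  have hy0 : y ≠ 0 := by
    obtain ⟨t, ht⟩ := Function.ne_iff.mp hx
    intro h0
    exact ht (by rw [← hyg t, h0]; rfl)
  have main : star y ⬝ᵥ (M *ᵥ y) = star x ⬝ᵥ (M.submatrix f f *ᵥ x) := by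
    simp only [dotProduct, mulVec, Pi.star_apply, star_trivial, submatrix_apply, hy]
    rw [sum_embed f x (fun i => ∑ j, M i j * ∑ t, if j = f t then x t else 0)]
    refine Finset.sum_congr rfl fun t _ => ?_
    congr 1
    calc (∑ j, M (f t) j * ∑ s, if j = f s then x s else 0)
        = ∑ j, (∑ s, if j = f s then x s else 0) * M (f t) j :=
          Finset.sum_congr rfl fun _ _ => mul_comm _ _
      _ = ∑ s, x s * M (f t) (f s) := sum_embed f x _
      _ = ∑ s, M (f t) (f s) * x s := Finset.sum_congr rfl fun _ _ => mul_comm _ _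
  rw [← main]
  exact hM.dotProduct_mulVec_pos hy0

lemma posDef_one_by_one {r : ℝ} :
    (Matrix.of fun _ _ : Fin 1 => r).PosDef ↔ 0 < r := by
  constructor
  · intro h
    have := h.dotProduct_mulVec_pos (x := fun _ => 1) (by
      intro h0
      simpa using congrFun h0 0)
    simpa [dotProduct, mulVec] using this
  · intro hr
    refine Matrix.PosDef.of_dotProduct_mulVec_pos (by ext i j; simp [conjTranspose_apply]) fun x hx => ?_
    have hx0 : x 0 ≠ 0 := by
      intro h0
      exact hx (funext fun i => by fin_cases i; exact h0)
    have : star x ⬝ᵥ ((Matrix.of fun _ _ : Fin 1 => r) *ᵥ x) = r * (x 0 * x 0) := by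
      simp [dotProduct, mulVec, Fin.sum_univ_one]
      ring
    rw [this]
    exact mul_pos hr (mul_self_pos.mpr hx0)

open scoped Matrix in
lemma posDef_fromBlocks₁₁ {m' n' : Type*} [Fintype m'] [DecidableEq m'] [Fintype n']
    {A : Matrix m' m' ℝ} (B : Matrix m' n' ℝ) (D : Matrix n' n' ℝ) (hA : A.PosDef)
    [Invertible A] :
    (fromBlocks A B Bᴴ D).PosDef ↔ (D - Bᴴ * A⁻¹ * B).PosDef := by
  rw [posDef_iff_dotProduct_mulVec, posDef_iff_dotProduct_mulVec, Matrix.IsHermitian.fromBlocks₁₁ _ _ hA.1]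
  refine and_congr_right fun _ => ?_
  constructor
  · intro h y hy
    have hxy : (Sum.elim (-((A⁻¹ * B) *ᵥ y)) y) ≠ 0 := by
      intro h0
      exact hy (funext fun j => congrFun h0 (Sum.inr j))
    have := h hxy
    rwa [dotProduct_mulVec, Matrix.schur_complement_eq₁₁ B D _ _ hA.1, neg_add_cancel,
      dotProduct_zero, zero_add, ← dotProduct_mulVec] at this
  · intro h x hx
    rw [dotProduct_mulVec, ← Sum.elim_comp_inl_inr x, Matrix.schur_complement_eq₁₁ B D _ _ hA.1]
    by_cases hy : x ∘ Sum.inr = 0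
    · have hx1 : x ∘ Sum.inl ≠ 0 := by
        intro h0
        apply hx
        funext i
        cases i with
        | inl i => exact congrFun h0 i
        | inr j => exact congrFun hy j
      rw [hy]
      simp only [mulVec_zero, add_zero, star_zero, zero_vecMul, zero_dotProduct, add_zero]
      rw [← dotProduct_mulVec]
      exact hA.dotProduct_mulVec_pos hx1
    · have h2 := h hy
      rw [dotProduct_mulVec] at h2
      have h1 : 0 ≤ star (x ∘ Sum.inl + (A⁻¹ * B) *ᵥ (x ∘ Sum.inr)) ᵥ* A ⬝ᵥ
          (x ∘ Sum.inl + (A⁻¹ * B) *ᵥ (x ∘ Sum.inr)) := by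
        rw [← dotProduct_mulVec]
        exact (posSemidef_iff_dotProduct_mulVec.mp hA.posSemidef).2 _
      linarith

lemma colMat_conjTranspose {K : Type*} (v : K → ℝ) :
    (Matrix.of fun i (_ : Fin 1) => v i)ᴴ = Matrix.of fun (_ : Fin 1) j => v j := by
  ext i j
  simp [conjTranspose_apply]

lemma quad_entry {K : Type*} [Fintype K] (X : Matrix K K ℝ) (v : K → ℝ) (i j : Fin 1) :
    ((Matrix.of fun i (_ : Fin 1) => v i)ᴴ * X * (Matrix.of fun i (_ : Fin 1) => v i)) i j
      = v ⬝ᵥ (X *ᵥ v) := by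
  simp only [Matrix.mul_apply, conjTranspose_apply, Matrix.of_apply, star_trivial,
    dotProduct, mulVec, Finset.sum_mul, Finset.mul_sum]
  rw [Finset.sum_comm]
  exact Finset.sum_congr rfl fun s _ => Finset.sum_congr rfl fun t _ => by ring

lemma append_posDef_iff {K : Type*} [Fintype K] [DecidableEq K]
    {X : Matrix K K ℝ} (hX : X.PosDef) (v : K → ℝ) (d : ℝ) :
    (fromBlocks X (Matrix.of fun i (_ : Fin 1) => v i)
      (Matrix.of fun (_ : Fin 1) j => v j) (Matrix.of fun _ _ => d)).PosDef
    ↔ 0 < d - v ⬝ᵥ (X⁻¹ *ᵥ v) := by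
  haveI : Invertible X := X.invertibleOfIsUnitDet (isUnit_iff_ne_zero.mpr hX.det_pos.ne')
  rw [← colMat_conjTranspose v, posDef_fromBlocks₁₁ _ _ hX]
  have : (Matrix.of fun _ _ : Fin 1 => d) -
      (Matrix.of fun i (_ : Fin 1) => v i)ᴴ * X⁻¹ * (Matrix.of fun i (_ : Fin 1) => v i)
      = Matrix.of fun _ _ : Fin 1 => d - v ⬝ᵥ (X⁻¹ *ᵥ v) := by
    ext i j
    simp only [Matrix.sub_apply, Matrix.of_apply, quad_entry]
  rw [this, posDef_one_by_one]

lemma extend_posDef {k : ℕ} {K : Type*} [Fintype K] [DecidableEq K]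
    (M : Matrix (Fin k) (Fin k) ℝ) (hM : M.PosDef)
    (g : K → Fin k) (hg : Function.Injective g) (b : K → ℝ) (d : ℝ)
    (hblock : (fromBlocks (M.submatrix g g) (Matrix.of fun i (_ : Fin 1) => b i)
        (Matrix.of fun (_ : Fin 1) j => b j) (Matrix.of fun _ _ => d)).PosDef) :
    ∃ c : Fin k → ℝ, (∀ s, c (g s) = b s) ∧
      (fromBlocks M (Matrix.of fun i (_ : Fin 1) => c i)
        (Matrix.of fun (_ : Fin 1) j => c j) (Matrix.of fun _ _ => d)).PosDef := by
  have hApd : (M.submatrix g g).PosDef := posDef_submatrix_of_injective hM g hg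
  have hAdet : IsUnit (M.submatrix g g).det := isUnit_iff_ne_zero.mpr hApd.det_pos.ne'
  have hMdet : IsUnit M.det := isUnit_iff_ne_zero.mpr hM.det_pos.ne'
  set u : K → ℝ := (M.submatrix g g)⁻¹ *ᵥ b with hu_def
  have hAu : (M.submatrix g g) *ᵥ u = b := by
    rw [hu_def, mulVec_mulVec, Matrix.mul_nonsing_inv _ hAdet, one_mulVec]
  set e : Fin k → ℝ := fun i => ∑ t, if i = g t then u t else 0 with he_def
  set c : Fin k → ℝ := M *ᵥ e with hc_def
  have hce : ∀ s, c (g s) = b s := by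
    intro s
    have h1 : c (g s) = ∑ t, u t * M (g s) (g t) := by
      have : c (g s) = ∑ j, e j * M (g s) j := by
        simp only [hc_def, mulVec, dotProduct]
        exact Finset.sum_congr rfl fun _ _ => mul_comm _ _
      rw [this, he_def]
      exact sum_embed g u (fun j => M (g s) j)
    rw [h1, ← congrFun hAu s]
    simp only [mulVec, dotProduct, submatrix_apply]
    exact Finset.sum_congr rfl fun _ _ => mul_comm _ _
  refine ⟨c, hce, ?_⟩
  rw [append_posDef_iff hM c d]
  have h0 : 0 < d - b ⬝ᵥ ((M.submatrix g g)⁻¹ *ᵥ b) := by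
    rw [← append_posDef_iff hApd b d]
    exact hblock
  have hMe : M⁻¹ *ᵥ c = e := by
    rw [hc_def, mulVec_mulVec, Matrix.nonsing_inv_mul _ hMdet, one_mulVec]
  have hq : c ⬝ᵥ (M⁻¹ *ᵥ c) = b ⬝ᵥ ((M.submatrix g g)⁻¹ *ᵥ b) := by
    rw [hMe, dotProduct_comm]
    have h2 : e ⬝ᵥ c = ∑ t, u t * c (g t) := by
      rw [he_def]
      exact sum_embed g u c
    rw [h2]
    rw [show b ⬝ᵥ ((M.submatrix g g)⁻¹ *ᵥ b) = ∑ t, b t * u t from rfl]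
    exact Finset.sum_congr rfl fun t _ => by rw [hce t]; ring
  rw [hq]
  exact h0

lemma band_extension_aux (n m : ℕ) (τ : ℕ → ℕ → ℝ)
    (hs : ∀ i j : ℕ, i < n → j < n → i ≤ j + m → j ≤ i + m → τ i j = τ j i)
    (H : ∀ i : ℕ, i + m < n →
      Matrix.PosDef (Matrix.of fun a b : Fin (m+1) => τ (i + a) (i + b))) :
    ∀ k : ℕ, m + 1 ≤ k → k ≤ n → ∃ M : Matrix (Fin k) (Fin k) ℝ, M.PosDef ∧
      ∀ i j : Fin k, (i : ℕ) ≤ (j : ℕ) + m → (j : ℕ) ≤ (i : ℕ) + m → M i j = τ i j := by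
  intro k hk
  induction k, hk using Nat.le_induction with
  | base =>
    intro hkn
    refine ⟨Matrix.of fun a b : Fin (m+1) => τ a b, ?_, fun i j _ _ => rfl⟩
    simpa using H 0 (by omega)
  | succ k hk IH =>
    intro hk1n
    obtain ⟨M, hMpd, hMband⟩ := IH (by omega)
    have hkn : k < n := by omega
    have hmk : m + 1 ≤ k := hk
    set g : Fin m → Fin k := fun t => ⟨k - m + ↑t, by have := t.isLt; omega⟩ with hg_def
    have hginj : Function.Injective g := by
      intro a c hac
      have : k - m + (a : ℕ) = k - m + (c : ℕ) := congrArg Fin.val hac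
      exact Fin.ext (by omega)
    set b : Fin m → ℝ := fun t => τ k (k - m + ↑t) with hb_def
    set d : ℝ := τ k k with hd_def
    have hblock : (fromBlocks (M.submatrix g g) (Matrix.of fun i (_ : Fin 1) => b i)
        (Matrix.of fun (_ : Fin 1) j => b j) (Matrix.of fun _ _ => d)).PosDef := by
      have hsub : (fromBlocks (M.submatrix g g) (Matrix.of fun i (_ : Fin 1) => b i)
          (Matrix.of fun (_ : Fin 1) j => b j) (Matrix.of fun _ _ => d))
          = (Matrix.of fun a c : Fin (m+1) =>
              τ ((k - m) + ↑a) ((k - m) + ↑c)).submatrix finSumFinEquiv finSumFinEquiv := by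
        ext x y
        rcases x with s | s <;> rcases y with t | t
        · simp only [fromBlocks_apply₁₁, submatrix_apply, finSumFinEquiv_apply_left,
            Matrix.of_apply, Fin.coe_castAdd]
          exact hMband (g s) (g t)
            (by show k - m + (s : ℕ) ≤ (k - m + (t : ℕ)) + m; have := s.isLt; omega)
            (by show k - m + (t : ℕ) ≤ (k - m + (s : ℕ)) + m; have := t.isLt; omega)
        · simp only [fromBlocks_apply₁₂, submatrix_apply, finSumFinEquiv_apply_left,
            finSumFinEquiv_apply_right, Matrix.of_apply, Fin.coe_castAdd, Fin.coe_natAdd]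
          have ht : (t : ℕ) = 0 := by have := t.isLt; omega
          have harg : k - m + (m + (t : ℕ)) = k := by omega
          rw [harg, hb_def]
          exact hs k (k - m + (s : ℕ)) hkn (by have := s.isLt; omega)
            (by have := s.isLt; omega) (by have := s.isLt; omega)
        · simp only [fromBlocks_apply₂₁, submatrix_apply, finSumFinEquiv_apply_left,
            finSumFinEquiv_apply_right, Matrix.of_apply, Fin.coe_castAdd, Fin.coe_natAdd]
          have hsz : (s : ℕ) = 0 := by have := s.isLt; omega
          have harg : k - m + (m + (s : ℕ)) = k := by omega
          rw [harg, hb_def]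
        · simp only [fromBlocks_apply₂₂, submatrix_apply, finSumFinEquiv_apply_right,
            Matrix.of_apply, Fin.coe_natAdd]
          have hsz : (s : ℕ) = 0 := by have := s.isLt; omega
          have htz : (t : ℕ) = 0 := by have := t.isLt; omega
          have harg : k - m + (m + (s : ℕ)) = k := by omega
          have harg2 : k - m + (m + (t : ℕ)) = k := by omega
          rw [harg, harg2, hd_def]
      rw [hsub]
      exact posDef_submatrix_of_injective (H (k - m) (by omega)) _ (Equiv.injective _)
    obtain ⟨c, hce, hNpd⟩ := extend_posDef M hMpd g hginj b d hblock
    refine ⟨(fromBlocks M (Matrix.of fun i (_ : Fin 1) => c i)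
        (Matrix.of fun (_ : Fin 1) j => c j) (Matrix.of fun _ _ => d)).submatrix
        finSumFinEquiv.symm finSumFinEquiv.symm,
      posDef_submatrix_of_injective hNpd _ (Equiv.injective _), ?_⟩
    have hsc : ∀ i : Fin k, finSumFinEquiv.symm (Fin.castSucc i) = Sum.inl i := by
      intro i
      rw [Equiv.symm_apply_eq]
      exact Fin.ext (by simp)
    have hsl : finSumFinEquiv.symm (Fin.last k) = Sum.inr 0 := by
      rw [Equiv.symm_apply_eq]
      exact Fin.ext (by simp)
    intro i j h1 h2
    induction i using Fin.lastCases with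
    | cast i' =>
      induction j using Fin.lastCases with
      | cast j' =>
        simp only [submatrix_apply, hsc, fromBlocks_apply₁₁, Fin.coe_castSucc] at h1 h2 ⊢
        exact hMband i' j' h1 h2
      | last =>
        simp only [submatrix_apply, hsc, hsl, fromBlocks_apply₁₂, Matrix.of_apply,
          Fin.coe_castSucc, Fin.val_last] at h1 h2 ⊢
        set s : Fin m := ⟨(i' : ℕ) - (k - m), by have := i'.isLt; omega⟩ with hs_def
        have hgs : g s = i' := Fin.ext (by show k - m + ((i' : ℕ) - (k - m)) = (i' : ℕ); omega)
        have hsym : τ (i' : ℕ) k = τ k (i' : ℕ) :=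
          hs _ _ (by have := i'.isLt; omega) hkn h1 h2
        rw [hsym, ← hgs]
        exact hce s
    | last =>
      induction j using Fin.lastCases with
      | cast j' =>
        simp only [submatrix_apply, hsc, hsl, fromBlocks_apply₂₁, Matrix.of_apply,
          Fin.coe_castSucc, Fin.val_last] at h1 h2 ⊢
        set s : Fin m := ⟨(j' : ℕ) - (k - m), by have := j'.isLt; omega⟩ with hs_def
        have hgs : g s = j' := Fin.ext (by show k - m + ((j' : ℕ) - (k - m)) = (j' : ℕ); omega)
        rw [← hgs]
        exact hce s
      | last =>
        simp only [submatrix_apply, hsl, fromBlocks_apply₂₂, Matrix.of_apply, Fin.val_last, hd_def]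

/-- Feasibility of the band extension problem: symmetric `m`-band data `σ`
admits a symmetric positive definite extension if and only if all of its
`(m+1) × (m+1)` principal band submatrices are positive definite. -/
theorem stmt_12 (n m : ℕ) (hn : 1 ≤ n) (hm : m ≤ n - 1)
    (σ : Fin n → Fin n → ℝ)
    (hσ : ∀ i j : Fin n, ((i : ℕ) ≤ (j : ℕ) + m ∧ (j : ℕ) ≤ (i : ℕ) + m) →
      σ i j = σ j i) :
    (∃ M : Matrix (Fin n) (Fin n) ℝ, M.PosDef ∧
      ∀ i j : Fin n, ((i : ℕ) ≤ (j : ℕ) + m ∧ (j : ℕ) ≤ (i : ℕ) + m) →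
        M i j = σ i j) ↔
    (∀ i : ℕ, ∀ h : i + m < n,
      Matrix.PosDef (Matrix.of (fun k l : Fin (m + 1) =>
        σ ⟨i + (k : ℕ), by have := k.isLt; omega⟩
          ⟨i + (l : ℕ), by have := l.isLt; omega⟩))) := by
  constructor
  · rintro ⟨M, hMpd, hMband⟩ i h
    have hf : Function.Injective
        (fun t : Fin (m+1) => (⟨i + (t : ℕ), by have := t.isLt; omega⟩ : Fin n)) := by
      intro a c hac
      have := congrArg Fin.val hac
      simp only at this
      exact Fin.ext (by omega)
    have heq : (Matrix.of (fun k l : Fin (m + 1) =>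
        σ ⟨i + (k : ℕ), by have := k.isLt; omega⟩ ⟨i + (l : ℕ), by have := l.isLt; omega⟩))
        = M.submatrix (fun t : Fin (m+1) => (⟨i + (t : ℕ), by have := t.isLt; omega⟩ : Fin n))
          (fun t : Fin (m+1) => (⟨i + (t : ℕ), by have := t.isLt; omega⟩ : Fin n)) := by
      ext a c
      simp only [Matrix.of_apply, submatrix_apply]
      refine (hMband _ _ ⟨?_, ?_⟩).symm
      · show i + (a : ℕ) ≤ i + (c : ℕ) + m
        have := a.isLt; omega
      · show i + (c : ℕ) ≤ i + (a : ℕ) + m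
        have := c.isLt; omega
    rw [heq]
    exact posDef_submatrix_of_injective hMpd _ hf
  · intro H
    obtain ⟨M, hMpd, hMband⟩ := band_extension_aux n m
      (fun i j => if h : i < n ∧ j < n then σ ⟨i, h.1⟩ ⟨j, h.2⟩ else 0)
      (by
        intro i j hi hj h1 h2
        simp only [dif_pos (And.intro hi hj), dif_pos (And.intro hj hi)]
        exact hσ ⟨i, hi⟩ ⟨j, hj⟩ ⟨h1, h2⟩)
      (by
        intro i h
        have e : (Matrix.of fun a b : Fin (m+1) =>
            (fun i j => if h : i < n ∧ j < n then σ ⟨i, h.1⟩ ⟨j, h.2⟩ else 0) (i + a) (i + b))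
            = Matrix.of (fun k l : Fin (m + 1) =>
              σ ⟨i + (k : ℕ), by have := k.isLt; omega⟩
                ⟨i + (l : ℕ), by have := l.isLt; omega⟩) := by
          ext a c
          have ha := a.isLt
          have hc := c.isLt
          simp only [Matrix.of_apply]
          rw [dif_pos (And.intro (by omega) (by omega))]
        rw [e]
        exact H i h)
      n (by omega) le_rfl
    refine ⟨M, hMpd, fun i j hij => ?_⟩
    rw [hMband i j hij.1 hij.2]
    rw [dif_pos (And.intro i.isLt j.isLt)]
end

section
/- Let n ≥ 1 and 0 ≤ m ≤ n−1 be integers, let σ_{ij} = σ_{ji} (for |i − j| ≤ m) be given real m-band data, and let Σ* be an n×n real symmetric positive definite matrix with Σ*_{ij} = σ_{ij} for all |i − j| ≤ m. If det(Σ*) ≥ det(M) for every n×n real symmetric positive definite matrix M with M_{ij} = σ_{ij} for all |i − j| ≤ m, then the inverse of Σ* is m-banded: (Σ*⁻¹)_{ij} = 0 whenever |i − j| > m. -/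
open Matrix
section
set_option maxHeartbeats 1000000

noncomputable def Umat (n : ℕ) (i j : Fin n) (t : ℝ) : Matrix (Fin n) (Fin 2) ℝ :=
  Matrix.of fun a l => if l = 0 then (if a = i then t else 0) else (if a = j then t else 0)

noncomputable def Vmat (n : ℕ) (i j : Fin n) : Matrix (Fin 2) (Fin n) ℝ :=
  Matrix.of fun l b => if l = 0 then (if b = j then (1:ℝ) else 0) else (if b = i then 1 else 0)

variable {n : ℕ} (i j : Fin n) (t : ℝ)

lemma UV_apply (a b : Fin n) :
    (Umat n i j t * Vmat n i j) a b
      = (if a = i ∧ b = j then t else 0) + (if a = j ∧ b = i then t else 0) := by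
  simp only [Umat, Vmat, Matrix.mul_apply, Fin.sum_univ_two, Matrix.of_apply]
  split_ifs <;> simp_all

lemma quadUV (x : Fin n → ℝ) :
    x ⬝ᵥ (Umat n i j t * Vmat n i j) *ᵥ x = 2 * t * (x i * x j) := by
  classical
  have hmv : (Umat n i j t * Vmat n i j) *ᵥ x
      = fun a => (if a = i then t * x j else 0) + (if a = j then t * x i else 0) := by
    funext a
    simp only [Matrix.mulVec, dotProduct, UV_apply, add_mul]
    rw [Finset.sum_add_distrib]
    congr 1
    · by_cases h : a = i <;> simp [h, Finset.sum_ite_eq', mul_comm]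
    · by_cases h : a = j <;> simp [h, Finset.sum_ite_eq', mul_comm]
  rw [hmv]
  simp only [dotProduct, mul_add, mul_ite, mul_zero]
  rw [Finset.sum_add_distrib]
  simp [Finset.sum_ite_eq']
  ring

lemma detEntries (S : Matrix (Fin n) (Fin n) ℝ) (hdet : IsUnit S.det) :
    (S + Umat n i j t * Vmat n i j).det
      = S.det * ((1 + t * S⁻¹ j i) * (1 + t * S⁻¹ i j) - (t * S⁻¹ j j) * (t * S⁻¹ i i)) := by
  rw [Matrix.det_add_mul _ _ hdet, Matrix.det_fin_two]
  congr 1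
  have e : ∀ l l' : Fin 2, ((1 + Vmat n i j * S⁻¹ * Umat n i j t :
        Matrix (Fin 2) (Fin 2) ℝ)) l l'
      = (if l = l' then (1:ℝ) else 0)
        + t * S⁻¹ (if l = 0 then j else i) (if l' = 0 then i else j) := by
    intro l l'
    simp only [Matrix.add_apply, Matrix.mul_apply, Umat, Vmat, Matrix.of_apply,
      Matrix.one_apply]
    congr 1
    by_cases h : l = 0 <;> by_cases h' : l' = 0 <;>
      simp [h, h', Finset.sum_ite_eq', ite_mul, mul_ite, mul_comm, mul_left_comm]
  rw [e, e, e, e]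
  norm_num
  try ring

lemma diagPos {S : Matrix (Fin n) (Fin n) ℝ} (hS : S.PosDef) (k : Fin n) :
    0 < S k k := by
  have := hS.dotProduct_mulVec_pos (x := Pi.single k 1) (by simp [Function.ne_iff])
  simpa [Matrix.mulVec_single, dotProduct_single] using this

lemma symmEq {S : Matrix (Fin n) (Fin n) ℝ} (hS : S.IsHermitian) : Sᵀ = S := by
  ext a b
  simpa using (hS.apply b a).symm

lemma csLem {S : Matrix (Fin n) (Fin n) ℝ} (hS : S.PosDef) (x : Fin n → ℝ) (k : Fin n) :
    (x k) ^ 2 ≤ (x ⬝ᵥ S *ᵥ x) * (S⁻¹ k k) := by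
  set B := S⁻¹ with hBdef
  have hdet : IsUnit S.det := isUnit_iff_ne_zero.2 hS.det_pos.ne'
  have hB : B.PosDef := hS.inv
  have hBkk : 0 < B k k := diagPos hB k
  set c : ℝ := x k / B k k with hc
  set u : Fin n → ℝ := B *ᵥ Pi.single k 1 with hu
  have key1 : S *ᵥ u = Pi.single k 1 := by
    rw [hu, Matrix.mulVec_mulVec, Matrix.mul_nonsing_inv _ hdet, Matrix.one_mulVec]
  have hsymmS : Sᵀ = S := symmEq hS.isHermitian
  have key3 : u ⬝ᵥ (S *ᵥ x) = x k := by
    rw [Matrix.dotProduct_mulVec, ← Matrix.mulVec_transpose, hsymmS, key1,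
      single_dotProduct, one_mul]
  have key4 : u ⬝ᵥ Pi.single k 1 = B k k := by
    simp [hu, Matrix.mulVec_single, dotProduct_single]
  have key2 : x ⬝ᵥ Pi.single k 1 = x k := by simp [dotProduct_single]
  have h0 := hS.posSemidef.dotProduct_mulVec_nonneg (x - c • u)
  rw [star_trivial] at h0
  have expand : (x - c • u) ⬝ᵥ S *ᵥ (x - c • u)
      = x ⬝ᵥ S *ᵥ x - c * (x k) - c * (x k) + c * c * B k k := by
    rw [Matrix.mulVec_sub, Matrix.mulVec_smul, key1]
    rw [sub_dotProduct, dotProduct_sub, dotProduct_sub]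
    rw [smul_dotProduct, dotProduct_smul, smul_dotProduct,
      dotProduct_smul]
    rw [key2, key3, key4]
    simp [smul_eq_mul]
    ring
  rw [expand, hc] at h0
  have hne := hBkk.ne'
  have e1 : x k / B k k * x k = x k ^ 2 / B k k := by ring
  have e2 : x k / B k k * (x k / B k k) * B k k = x k ^ 2 / B k k := by
    field_simp
  rw [e1, e2] at h0
  have h2 : x k ^ 2 / B k k ≤ x ⬝ᵥ S *ᵥ x := by linarith
  exact (div_le_iff₀ hBkk).1 h2

lemma auxMain (n m : ℕ)
    (σ : Fin n → Fin n → ℝ)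
    (Sig : Matrix (Fin n) (Fin n) ℝ) (hSig : Sig.PosDef)
    (hband : ∀ i j : Fin n, ((i : ℕ) ≤ (j : ℕ) + m ∧ (j : ℕ) ≤ (i : ℕ) + m) →
      Sig i j = σ i j)
    (hmax : ∀ M : Matrix (Fin n) (Fin n) ℝ, M.PosDef →
      (∀ i j : Fin n, ((i : ℕ) ≤ (j : ℕ) + m ∧ (j : ℕ) ≤ (i : ℕ) + m) →
        M i j = σ i j) →
      M.det ≤ Sig.det)
    (i j : Fin n) (hij : (i : ℕ) + m < (j : ℕ)) :
    Sig⁻¹ i j = 0 := by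
  classical
  by_contra hc0
  set B := Sig⁻¹ with hBdef
  have hB : B.PosDef := hSig.inv
  have hdet : IsUnit Sig.det := isUnit_iff_ne_zero.2 hSig.det_pos.ne'
  have hBii : 0 < B i i := diagPos hB i
  have hBjj : 0 < B j j := diagPos hB j
  have hBsymm : B j i = B i j := by
    have := symmEq hB.isHermitian
    calc B j i = Bᵀ i j := rfl
    _ = B i j := by rw [this]
  set c : ℝ := B i j with hcdef
  set K : ℝ := B i i + B j j with hK
  set γ : ℝ := c ^ 2 - B i i * B j j with hγ
  set D : ℝ := (1 + c ^ 2) * (K + |γ| + 1) with hD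
  have hKpos : 0 < K := by rw [hK]; linarith
  have hDpos : 0 < D := by rw [hD]; positivity
  set t : ℝ := c / D with ht
  -- |t| * K ≤ 1/2
  have htK : |t| * K ≤ 1 / 2 := by
    have h1 : |t| = |c| / D := by rw [ht, abs_div, abs_of_pos hDpos]
    have h2 : 2 * |c| ≤ 1 + c ^ 2 := by nlinarith [sq_nonneg (|c| - 1), sq_abs c]
    have h3 : K ≤ K + |γ| + 1 := by linarith [abs_nonneg γ]
    rw [h1, div_mul_eq_mul_div, div_le_iff₀ hDpos]
    rw [hD]
    nlinarith [abs_nonneg c, abs_nonneg γ]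
  -- the perturbed matrix
  set M : Matrix (Fin n) (Fin n) ℝ := Sig + Umat n i j t * Vmat n i j with hM
  have hine : i ≠ j := by
    intro h; rw [h] at hij; omega
  -- M is positive definite
  have hMpd : M.PosDef := by
    refine Matrix.PosDef.of_dotProduct_mulVec_pos ?_ ?_
    · have h1 : Sigᵀ = Sig := symmEq hSig.isHermitian
      have : Mᵀ = M := by
        ext a b
        simp only [hM, Matrix.transpose_apply, Matrix.add_apply, UV_apply]
        rw [show Sig b a = Sigᵀ a b from rfl, h1]
        by_cases h2 : a = i <;> by_cases h3 : b = j <;> by_cases h4 : a = j <;>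
          by_cases h5 : b = i <;> simp [h2, h3, h4, h5, hine, Ne.symm hine]
      ext a b
      simp only [Matrix.conjTranspose_apply, star_trivial]
      rw [show M b a = Mᵀ a b from rfl, this]
    · intro x hx
      rw [star_trivial]
      have hQ : 0 < x ⬝ᵥ Sig *ᵥ x := by
        have := hSig.dotProduct_mulVec_pos hx; rwa [star_trivial] at this
      have cs1 : (x i) ^ 2 ≤ (x ⬝ᵥ Sig *ᵥ x) * B i i := csLem hSig x i
      have cs2 : (x j) ^ 2 ≤ (x ⬝ᵥ Sig *ᵥ x) * B j j := csLem hSig x j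
      have hquad : x ⬝ᵥ M *ᵥ x = x ⬝ᵥ Sig *ᵥ x + 2 * t * (x i * x j) := by
        rw [hM, Matrix.add_mulVec, dotProduct_add, quadUV]
      rw [hquad]
      set Q : ℝ := x ⬝ᵥ Sig *ᵥ x
      -- |2 t x i x j| ≤ |t| (x i ^2 + x j ^2) ≤ |t| K Q ≤ Q/2
      have habs : |2 * t * (x i * x j)| ≤ |t| * ((x i) ^ 2 + (x j) ^ 2) := by
        rw [abs_mul, abs_mul]
        have : |x i * x j| ≤ ((x i)^2 + (x j)^2) / 2 := by
          rw [abs_mul]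
          nlinarith [sq_nonneg (|x i| - |x j|), sq_abs (x i), sq_abs (x j), abs_nonneg (x i),
            abs_nonneg (x j)]
        have h2 : |(2:ℝ)| = 2 := by norm_num
        rw [h2]
        nlinarith [abs_nonneg t]
      have hsum : (x i) ^ 2 + (x j) ^ 2 ≤ Q * K := by
        rw [hK]; nlinarith
      have hb2 : |2 * t * (x i * x j)| ≤ Q / 2 := by
        calc |2 * t * (x i * x j)| ≤ |t| * ((x i) ^ 2 + (x j) ^ 2) := habs
        _ ≤ |t| * (Q * K) := by
            have := abs_nonneg t
            nlinarith
        _ = (|t| * K) * Q := by ring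
        _ ≤ (1/2) * Q := by nlinarith [htK, hQ.le]
        _ = Q / 2 := by ring
      have := neg_abs_le (2 * t * (x i * x j))
      linarith
  -- band condition for M
  have hMband : ∀ a b : Fin n, ((a : ℕ) ≤ (b : ℕ) + m ∧ (b : ℕ) ≤ (a : ℕ) + m) →
      M a b = σ a b := by
    intro a b hab
    have hP : (Umat n i j t * Vmat n i j) a b = 0 := by
      rw [UV_apply]
      have h1 : ¬(a = i ∧ b = j) := by
        rintro ⟨rfl, rfl⟩; omega
      have h2 : ¬(a = j ∧ b = i) := by
        rintro ⟨rfl, rfl⟩; omega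
      simp [h1, h2]
    rw [hM, Matrix.add_apply, hP, add_zero, hband a b hab]
  -- determinant inequality
  have hdM := hmax M hMpd hMband
  rw [hM, detEntries i j t Sig hdet, ← hBdef, hBsymm, ← hcdef] at hdM
  have hdpos : 0 < Sig.det := hSig.det_pos
  have hfac : (1 + t * c) * (1 + t * c) - t * B j j * (t * B i i) ≤ 1 := by
    by_contra hcon
    push_neg at hcon
    nlinarith [hdpos]
  -- but the factor is > 1 since c ≠ 0
  have h2D : 0 < 2 * D + γ := by
    have : |γ| + 1 ≤ D := by
      rw [hD]
      nlinarith [abs_nonneg γ, sq_nonneg c, hKpos]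
    have := neg_abs_le γ
    linarith
  have hfac2 : (1 + t * c) * (1 + t * c) - t * B j j * (t * B i i) - 1
      = (c ^ 2 / D ^ 2) * (2 * D + γ) := by
    rw [ht, hγ]
    field_simp
    ring
  have hcpos : 0 < c ^ 2 := by positivity
  have hq : 0 < c ^ 2 / D ^ 2 := div_pos hcpos (by positivity)
  have := mul_pos hq h2D
  linarith
end

/-- If a symmetric positive definite extension `Σ*` of given `m`-band data `σ`
has maximal determinant among all symmetric positive definite extensions of
`σ`, then its inverse is `m`-banded. -/
theorem stmt_13 (n m : ℕ) (hn : 1 ≤ n) (hm : m ≤ n - 1)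
    (σ : Fin n → Fin n → ℝ)
    (hσ : ∀ i j : Fin n, ((i : ℕ) ≤ (j : ℕ) + m ∧ (j : ℕ) ≤ (i : ℕ) + m) →
      σ i j = σ j i)
    (Sig : Matrix (Fin n) (Fin n) ℝ) (hSig : Sig.PosDef)
    (hband : ∀ i j : Fin n, ((i : ℕ) ≤ (j : ℕ) + m ∧ (j : ℕ) ≤ (i : ℕ) + m) →
      Sig i j = σ i j)
    (hmax : ∀ M : Matrix (Fin n) (Fin n) ℝ, M.PosDef →
      (∀ i j : Fin n, ((i : ℕ) ≤ (j : ℕ) + m ∧ (j : ℕ) ≤ (i : ℕ) + m) →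
        M i j = σ i j) →
      M.det ≤ Sig.det) :
    ∀ i j : Fin n, ((i : ℕ) + m < (j : ℕ) ∨ (j : ℕ) + m < (i : ℕ)) →
      Sig⁻¹ i j = 0 := by
  intro i j hij
  have hsymm : Sig⁻¹ j i = Sig⁻¹ i j := by
    have h := symmEq hSig.inv.isHermitian
    calc Sig⁻¹ j i = (Sig⁻¹)ᵀ i j := rfl
    _ = Sig⁻¹ i j := by rw [h]
  rcases hij with h | h
  · exact auxMain n m σ Sig hSig hband hmax i j h
  · rw [← hsymm]
    exact auxMain n m σ Sig hSig hband hmax j i h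
end

section
/- Let n ≥ 3 and let σ_{ij} = σ_{ji} be given real numbers for all pairs (i,j) with 1 ≤ i, j ≤ n except (1,n) and (n,1). For x ∈ ℝ, let S(x) be the n×n symmetric matrix with S(x)_{ij} = σ_{ij} at the specified positions and S(x)_{1n} = S(x)_{n1} = x. Assume the leading principal (n−1)×(n−1) submatrix L = [σ_{ij}]_{i,j=1}^{n−1} is positive definite, let y = L⁻¹ e₁ (so that y₁ = (L⁻¹)₁₁ > 0), and set x° = −(1/y₁) Σ_{j=2}^{n−1} σ_{nj} y_j. Then: (a) det S(x) ≤ det S(x°) for all x ∈ ℝ; and (b) if S(x°) is invertible, then (S(x°)⁻¹)_{1,n} = 0. -/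
open Matrix

/-- Auxiliary equivalence splitting `Fin n` into its first `n-1` elements and the last one. -/
def stmt14Equiv (n : ℕ) (hn : 0 < n) : (Fin (n-1) ⊕ Unit) ≃ Fin n where
  toFun := Sum.elim (fun k => ⟨(k : ℕ), by have := k.isLt; omega⟩) fun _ => ⟨n - 1, by omega⟩
  invFun i := if h : (i : ℕ) < n - 1 then Sum.inl ⟨(i : ℕ), h⟩ else Sum.inr ()
  left_inv := by
    rintro (k | ⟨⟩)
    · simp [k.isLt]
    · simp
  right_inv := by
    intro i
    by_cases h : (i : ℕ) < n - 1
    · simp [h]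
    · have hi : (i : ℕ) = n - 1 := by have := i.isLt; omega
      simp [h, Fin.ext_iff, hi]

lemma stmt14_aux_det {m : ℕ} (L : Matrix (Fin m) (Fin m) ℝ) (hL : IsUnit L.det)
    (v : Fin m → ℝ) (d : ℝ) :
    (Matrix.fromBlocks L (Matrix.of fun k (_ : Unit) => v k)
      (Matrix.of fun (_ : Unit) k => v k) (Matrix.of fun (_ : Unit) (_ : Unit) => d)).det
      = L.det * (d - (v ᵥ* L⁻¹) ⬝ᵥ v) := by
  letI := L.invertibleOfIsUnitDet hL
  rw [Matrix.det_fromBlocks₁₁]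
  congr 1
  rw [Matrix.det_unique]
  simp [Matrix.mul_apply, Matrix.sub_apply, Matrix.vecMul, dotProduct,
    invOf_eq_nonsing_inv, Finset.sum_mul]

lemma stmt14_aux_inv {m : ℕ} (L : Matrix (Fin m) (Fin m) ℝ) (hL : IsUnit L.det)
    (v : Fin m → ℝ) (d : ℝ) (hs : d - (v ᵥ* L⁻¹) ⬝ᵥ v ≠ 0) (k : Fin m)
    (hk : (L⁻¹ *ᵥ v) k = 0) :
    (Matrix.fromBlocks L (Matrix.of fun k (_ : Unit) => v k)
      (Matrix.of fun (_ : Unit) k => v k) (Matrix.of fun (_ : Unit) (_ : Unit) => d))⁻¹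
      (Sum.inl k) (Sum.inr ()) = 0 := by
  letI := L.invertibleOfIsUnitDet hL
  haveI : Invertible ((Matrix.of fun (_ : Unit) (_ : Unit) => d) -
      (Matrix.of fun (_ : Unit) k => v k) * ⅟L * (Matrix.of fun k (_ : Unit) => v k)) := by
    apply Matrix.invertibleOfIsUnitDet
    rw [Matrix.det_unique]
    have : ((Matrix.of fun (_ : Unit) (_ : Unit) => d) -
        (Matrix.of fun (_ : Unit) k => v k) * ⅟L * (Matrix.of fun k (_ : Unit) => v k))
        (default : Unit) (default : Unit) = d - (v ᵥ* L⁻¹) ⬝ᵥ v := by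
      simp [Matrix.mul_apply, Matrix.sub_apply, Matrix.vecMul, dotProduct,
        invOf_eq_nonsing_inv, Finset.sum_mul]
    rw [this]
    exact isUnit_iff_ne_zero.2 hs
  letI := Matrix.fromBlocks₁₁Invertible L (Matrix.of fun k (_ : Unit) => v k)
    (Matrix.of fun (_ : Unit) k => v k) (Matrix.of fun (_ : Unit) (_ : Unit) => d)
  rw [← invOf_eq_nonsing_inv, Matrix.invOf_fromBlocks₁₁_eq, Matrix.fromBlocks_apply₁₂]
  have h0 : ∑ l, L⁻¹ k l * v l = 0 := by
    simpa [Matrix.mulVec, dotProduct] using hk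
  simp [Matrix.mul_apply, invOf_eq_nonsing_inv, h0]


/-- One-step central extension: for an `n × n` partially specified
`(n−2)`-band symmetric matrix (all entries specified except the corners
`(1,n)` and `(n,1)`, which carry the free variable `x`), with positive
definite leading principal `(n−1) × (n−1)` submatrix `L`, the choice
`x° = −(1/y₁) Σ_{j=2}^{n−1} σ_{nj} y_j` with `y = L⁻¹ e₁` maximizes the
determinant of the completion, and the `(1,n)` entry of the inverse of the
central completion vanishes. -/

theorem stmt_14 (n : ℕ) (hn : 3 ≤ n)
    (σ : Fin n → Fin n → ℝ) (hσ : ∀ i j : Fin n, σ i j = σ j i)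
    (S : ℝ → Matrix (Fin n) (Fin n) ℝ)
    (hS : ∀ (x : ℝ) (i j : Fin n), S x i j =
      if ((i : ℕ) = 0 ∧ (j : ℕ) = n - 1) ∨ ((i : ℕ) = n - 1 ∧ (j : ℕ) = 0)
      then x else σ i j)
    (L : Matrix (Fin (n - 1)) (Fin (n - 1)) ℝ)
    (hL : ∀ k l : Fin (n - 1), L k l =
      σ ⟨(k : ℕ), by have := k.isLt; omega⟩ ⟨(l : ℕ), by have := l.isLt; omega⟩)
    (hLpd : L.PosDef)
    (y : Fin (n - 1) → ℝ)
    (hy : y = L⁻¹.mulVec (Pi.single (⟨0, by omega⟩ : Fin (n - 1)) (1 : ℝ)))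
    (x₀ : ℝ)
    (hx₀ : x₀ = -(1 / y (⟨0, by omega⟩ : Fin (n - 1))) *
      ∑ j : Fin (n - 1), (if (j : ℕ) = 0 then 0 else
        σ ⟨n - 1, by omega⟩ ⟨(j : ℕ), by have := j.isLt; omega⟩ * y j)) :
    (∀ x : ℝ, (S x).det ≤ (S x₀).det) ∧
    (IsUnit (S x₀).det →
      (S x₀)⁻¹ (⟨0, by omega⟩ : Fin n) (⟨n - 1, by omega⟩ : Fin n) = 0) := by
  have hn1 : 0 < n - 1 := by omega
  set z : Fin (n - 1) := ⟨0, hn1⟩ with hz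
  set N : Matrix (Fin (n - 1)) (Fin (n - 1)) ℝ := L⁻¹ with hN
  set w : Fin (n - 1) → ℝ := fun k =>
    if (k : ℕ) = 0 then 0 else σ ⟨n - 1, by omega⟩ ⟨(k : ℕ), by have := k.isLt; omega⟩ with hw
  set v : ℝ → Fin (n - 1) → ℝ := fun x => w + x • (Pi.single z (1 : ℝ) : Fin (n - 1) → ℝ) with hv
  set d : ℝ := σ ⟨n - 1, by omega⟩ ⟨n - 1, by omega⟩ with hd
  set c : ℝ := ∑ j : Fin (n - 1), (if (j : ℕ) = 0 then 0 else
      σ ⟨n - 1, by omega⟩ ⟨(j : ℕ), by have := j.isLt; omega⟩ * y j) with hc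
  have hx₀' : x₀ = -(1 / y z) * c := hx₀
  set e : (Fin (n - 1) ⊕ Unit) ≃ Fin n := stmt14Equiv n (by omega) with he
  have hLu : IsUnit L.det := hLpd.det_pos.ne'.isUnit
  -- symmetry of N
  have hLt : Lᵀ = L := by
    ext k l
    rw [Matrix.transpose_apply, hL, hL, hσ]
  have hNt : Nᵀ = N := by
    rw [hN, Matrix.transpose_nonsing_inv, hLt]
  have hNs : ∀ k l, N k l = N l k := fun k l => (congrFun (congrFun hNt k) l).symm
  -- y is the z-column of N
  have hyk : ∀ k, y k = N k z := by
    intro k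
    rw [hy]
    simp [Matrix.mulVec_single]
  -- positivity of y z
  have hy0 : 0 < y z := by
    have hNpd : N.PosDef := hLpd.inv
    have hne : (Pi.single z (1 : ℝ) : Fin (n - 1) → ℝ) ≠ 0 := by
      intro h
      have := congrFun h z
      simp at this
    have := hNpd.dotProduct_mulVec_pos hne
    rw [hyk]
    simpa [Matrix.mulVec_single, dotProduct_single] using this
  have hyz : y z * x₀ = -c := by
    rw [hx₀']
    field_simp
  -- block decomposition
  have hSe : ∀ (x : ℝ) (s t : Fin (n - 1) ⊕ Unit),
      Matrix.fromBlocks L (Matrix.of fun k (_ : Unit) => v x k)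
        (Matrix.of fun (_ : Unit) k => v x k) (Matrix.of fun (_ : Unit) (_ : Unit) => d) s t
        = S x (e s) (e t) := by
    intro x s t
    rcases s with k | ⟨⟩ <;> rcases t with l | ⟨⟩
    · show L k l = S x ⟨(k : ℕ), _⟩ ⟨(l : ℕ), _⟩
      rw [hS, if_neg, hL]
      rintro (⟨h1, h2⟩ | ⟨h1, h2⟩)
      · have := l.isLt; simp at h2; omega
      · have := k.isLt; simp at h1; omega
    · show v x k = S x ⟨(k : ℕ), _⟩ ⟨n - 1, _⟩
      rw [hS]
      by_cases hk : (k : ℕ) = 0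
      · have hkz : k = z := Fin.ext hk
        rw [if_pos (Or.inl ⟨hk, rfl⟩)]
        simp [hv, hw, hkz, hz]
      · rw [if_neg]
        · have hkz : k ≠ z := fun h => hk (congrArg Fin.val h)
          have hvk : v x k = σ ⟨n - 1, by omega⟩ ⟨(k : ℕ), by have := k.isLt; omega⟩ := by
            simp [hv, hw, hk, Pi.single_eq_of_ne hkz]
          rw [hvk, hσ]
        · rintro (⟨h1, _⟩ | ⟨_, h2⟩)
          · exact hk h1
          · have h2' : n - 1 = 0 := h2
            omega
    · show v x l = S x ⟨n - 1, _⟩ ⟨(l : ℕ), _⟩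
      rw [hS]
      by_cases hl : (l : ℕ) = 0
      · have hlz : l = z := Fin.ext hl
        rw [if_pos (Or.inr ⟨rfl, hl⟩)]
        simp [hv, hw, hlz, hz]
      · rw [if_neg]
        · have hlz : l ≠ z := fun h => hl (by rw [h])
          simp [hv, hw, hl, Pi.single_eq_of_ne hlz]
        · rintro (⟨h1, _⟩ | ⟨_, h2⟩)
          · simp at h1; omega
          · exact hl h2
    · show d = S x ⟨n - 1, _⟩ ⟨n - 1, _⟩
      rw [hS, if_neg]
      rintro (⟨h1, _⟩ | ⟨_, h2⟩)
      · have h1' : n - 1 = 0 := h1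
        omega
      · have h2' : n - 1 = 0 := h2
        omega
  have hblock : ∀ x : ℝ, S x =
      (Matrix.fromBlocks L (Matrix.of fun k (_ : Unit) => v x k)
        (Matrix.of fun (_ : Unit) k => v x k)
        (Matrix.of fun (_ : Unit) (_ : Unit) => d)).submatrix e.symm e.symm := by
    intro x
    ext i j
    rw [Matrix.submatrix_apply, hSe, Equiv.apply_symm_apply, Equiv.apply_symm_apply]
  have hdet : ∀ x : ℝ, (S x).det = L.det * (d - (v x ᵥ* N) ⬝ᵥ v x) := by
    intro x
    rw [hblock x, Matrix.det_submatrix_equiv_self, stmt14_aux_det L hLu]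
  -- the three dot products
  have hc1 : N z ⬝ᵥ w = c := by
    rw [hc, dotProduct]
    refine Finset.sum_congr rfl fun j _ => ?_
    by_cases hj : (j : ℕ) = 0
    · have : j = z := Fin.ext hj
      simp [hw, this, hj, hz]
    · rw [if_neg hj]
      simp only [hw, if_neg hj]
      rw [hNs z j, ← hyk]
      try ring
  have hc2 : w ⬝ᵥ Nᵀ z = c := by
    rw [hNt, hc, dotProduct]
    refine Finset.sum_congr rfl fun j _ => ?_
    by_cases hj : (j : ℕ) = 0
    · have : j = z := Fin.ext hj
      simp [hw, this, hj, hz]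
    · rw [if_neg hj]
      simp only [hw, if_neg hj]
      rw [hNs z j, ← hyk]
      try ring
  have hQ : ∀ x : ℝ, (v x ᵥ* N) ⬝ᵥ v x = (w ᵥ* N) ⬝ᵥ w + 2 * c * x + y z * x ^ 2 := by
    intro x
    have h1 : (Pi.single z (1 : ℝ) ᵥ* N) ⬝ᵥ w = c := by
      rw [Matrix.single_one_vecMul]; exact hc1
    have h2 : (w ᵥ* N) ⬝ᵥ Pi.single z (1 : ℝ) = c := by
      rw [dotProduct_single, mul_one]
      have : (w ᵥ* N) z = w ⬝ᵥ Nᵀ z := by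
        simp [Matrix.vecMul, dotProduct, Matrix.transpose_apply]
      rw [this, hc2]
    have h3 : (Pi.single z (1 : ℝ) ᵥ* N) ⬝ᵥ Pi.single z (1 : ℝ) = y z := by
      rw [Matrix.single_one_vecMul, dotProduct_single, mul_one, hyk]; rfl
    calc (v x ᵥ* N) ⬝ᵥ v x
        = (w ᵥ* N) ⬝ᵥ w + x * ((w ᵥ* N) ⬝ᵥ Pi.single z (1:ℝ))
          + x * ((Pi.single z (1:ℝ) ᵥ* N) ⬝ᵥ w)
          + x * (x * ((Pi.single z (1:ℝ) ᵥ* N) ⬝ᵥ Pi.single z (1:ℝ))) := by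
          simp only [hv, Matrix.add_vecMul, Matrix.smul_vecMul, add_dotProduct,
            dotProduct_add, smul_dotProduct, dotProduct_smul,
            smul_eq_mul]
          ring
      _ = (w ᵥ* N) ⬝ᵥ w + 2 * c * x + y z * x ^ 2 := by
          rw [h1, h2, h3]; ring
  constructor
  · intro x
    rw [hdet x, hdet x₀, hQ x, hQ x₀]
    have hdiff : (w ᵥ* N) ⬝ᵥ w + 2 * c * x + y z * x ^ 2
        = ((w ᵥ* N) ⬝ᵥ w + 2 * c * x₀ + y z * x₀ ^ 2) + y z * (x - x₀) ^ 2 := by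
      linear_combination (2 * (x - x₀)) * hyz
    rw [hdiff]
    have h1 : 0 ≤ y z * (x - x₀) ^ 2 := mul_nonneg hy0.le (sq_nonneg _)
    nlinarith [mul_nonneg hLpd.det_pos.le h1]
  · intro hU
    have hs : d - (v x₀ ᵥ* N) ⬝ᵥ v x₀ ≠ 0 := by
      intro h
      rw [isUnit_iff_ne_zero, hdet x₀, h, mul_zero] at hU
      exact hU rfl
    have hk : (N *ᵥ v x₀) z = 0 := by
      have hexp : (N *ᵥ v x₀) z = N z ⬝ᵥ w + x₀ * N z z := by
        simp only [hv, Matrix.mulVec_add, Matrix.mulVec_smul, Pi.add_apply, Pi.smul_apply,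
          Matrix.mulVec_single, smul_eq_mul, mul_one]
        simp only [Pi.smul_apply, op_smul_eq_mul, mul_one]
        rfl
      rw [hexp, hc1, ← hyk, mul_comm, hyz]
      ring
    have h0 : (⟨0, by omega⟩ : Fin n) = e (Sum.inl z) := by
      rw [he]; rfl
    have hlast : (⟨n - 1, by omega⟩ : Fin n) = e (Sum.inr ()) := by
      rw [he]; rfl
    rw [hblock x₀, Matrix.inv_submatrix_equiv, Matrix.submatrix_apply, h0, hlast,
      Equiv.symm_apply_apply, Equiv.symm_apply_apply]
    exact stmt14_aux_inv L hLu (v x₀) d hs z hk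
end
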